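/- arXiv:1910.13139 — 10 statements merged into one kernel-verified Lean document; each statement's English description precedes it below -/
import Mathlib

section
/- Let m ≥ 1 and let A be a symmetric positive definite m×m matrix with real entries and determinant D, defining the positive definite quadratic form f(x) = xᵀAx. Then there exists a vector v ∈ ℤ^m with v ≠ 0 such that 0 < f(v) ≤ (4/3)^((m−1)/2) · D^(1/m). -/
open Matrix

namespace HermiteAux

variable {k : ℕ}

/-- The real quadratic form of a matrix. -/
def Qr (A : Matrix (Fin k) (Fin k) ℝ) (x : Fin k → ℝ) : ℝ := x ⬝ᵥ A *ᵥ x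

/-- The quadratic form evaluated on integer vectors. -/
def Qi (A : Matrix (Fin k) (Fin k) ℝ) (v : Fin k → ℤ) : ℝ := Qr A (fun i => (v i : ℝ))

/-- Positive definiteness (concrete form). -/
def PD (A : Matrix (Fin k) (Fin k) ℝ) : Prop := ∀ x : Fin k → ℝ, x ≠ 0 → 0 < Qr A x

lemma castVec_ne_zero {v : Fin k → ℤ} (hv : v ≠ 0) : (fun i => (v i : ℝ)) ≠ 0 := by
  intro h
  apply hv
  funext i
  have : ((v i : ℝ)) = 0 := congrFun h i
  exact_mod_cast this

lemma Qi_pos {A : Matrix (Fin k) (Fin k) ℝ} (hA : PD A) {v : Fin k → ℤ} (hv : v ≠ 0) :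
    0 < Qi A v := hA _ (castVec_ne_zero hv)

lemma Qr_expand (A : Matrix (Fin k) (Fin k) ℝ) (x : Fin k → ℝ) :
    Qr A x = ∑ i, ∑ j, x i * A i j * x j := by
  simp [Qr, Matrix.mulVec, dotProduct, Finset.mul_sum, mul_assoc]

lemma Qr_smul (A : Matrix (Fin k) (Fin k) ℝ) (c : ℝ) (x : Fin k → ℝ) :
    Qr A (c • x) = c ^ 2 * Qr A x := by
  simp only [Qr_expand, Pi.smul_apply, smul_eq_mul, Finset.mul_sum]
  refine Finset.sum_congr rfl fun i _ => Finset.sum_congr rfl fun j _ => by ring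

lemma exists_coercive (A : Matrix (Fin (k+1)) (Fin (k+1)) ℝ) (hA : PD A) :
    ∃ ε > 0, ∀ x : Fin (k+1) → ℝ, ε * ∑ i, x i ^ 2 ≤ Qr A x := by
  set E := EuclideanSpace ℝ (Fin (k+1))
  have hcont : Continuous (fun x : E => Qr A (fun i => x i)) := by
    simp only [Qr_expand]
    exact (by fun_prop : Continuous fun y : Fin (k+1) → ℝ => ∑ i, ∑ j, y i * A i j * y j).comp (PiLp.continuous_ofLp 2 _)
  have hsph : IsCompact (Metric.sphere (0 : E) 1) := isCompact_sphere 0 1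
  have hne : (Metric.sphere (0 : E) 1).Nonempty := by
    refine ⟨EuclideanSpace.single 0 1, ?_⟩
    simp only [Metric.mem_sphere, dist_zero_right]
    rw [EuclideanSpace.norm_single]
    norm_num
  obtain ⟨x₀, hx₀mem, hx₀min⟩ := hsph.exists_isMinOn hne hcont.continuousOn
  have hx₀norm : ‖x₀‖ = 1 := by simpa using hx₀mem
  have hx₀ne : (fun i => x₀ i) ≠ 0 := by
    intro h
    have : x₀ = 0 := by
      exact PiLp.ext (fun i => congrFun h i)
    rw [this] at hx₀norm; simp at hx₀norm
  refine ⟨Qr A (fun i => x₀ i), hA _ hx₀ne, ?_⟩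
  intro x
  by_cases hx : x = 0
  · subst hx; simp [Qr_expand]
  · have hs : 0 < ∑ i, x i ^ 2 := by
      have : ∃ i, x i ≠ 0 := by
        by_contra h
        push_neg at h
        exact hx (funext h)
      obtain ⟨i, hi⟩ := this
      have : (0:ℝ) < x i ^ 2 := by positivity
      refine lt_of_lt_of_le this ?_
      exact Finset.single_le_sum (f := fun j => x j ^ 2) (fun j _ => by positivity) (Finset.mem_univ i)
    set s : ℝ := Real.sqrt (∑ i, x i ^ 2) with hs_def
    have hspos : 0 < s := Real.sqrt_pos.mpr hs
    set y : E := WithLp.toLp 2 (s⁻¹ • x : Fin (k+1) → ℝ) with hy_def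
    have hymem : y ∈ Metric.sphere (0 : E) 1 := by
      simp only [Metric.mem_sphere, dist_zero_right]
      rw [EuclideanSpace.norm_eq]
      have : ∀ i, ‖(y i : ℝ)‖ ^ 2 = s⁻¹ ^ 2 * x i ^ 2 := by
        intro i
        simp only [hy_def, PiLp.toLp_apply, Pi.smul_apply, smul_eq_mul, Real.norm_eq_abs, sq_abs]
        ring
      rw [Finset.sum_congr rfl fun i _ => this i, ← Finset.mul_sum]
      rw [Real.sqrt_eq_one]
      have : s ^ 2 = ∑ i, x i ^ 2 := Real.sq_sqrt hs.le
      field_simp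
      linarith [this]
    have hmin : (Qr A fun i => x₀ i) ≤ (Qr A fun i => y i) := hx₀min hymem
    have hQy : Qr A (fun i => y i) = s⁻¹ ^ 2 * Qr A x := by
      have : (fun i => y i) = s⁻¹ • x := rfl
      rw [this, Qr_smul]
    rw [hQy] at hmin
    have hs2 : s ^ 2 = ∑ i, x i ^ 2 := Real.sq_sqrt hs.le
    have : Qr A (fun i => x₀ i) * s ^ 2 ≤ Qr A x := by
      have h2 : 0 < s ^ 2 := by positivity
      calc Qr A (fun i => x₀ i) * s ^ 2 ≤ (s⁻¹ ^ 2 * Qr A x) * s ^ 2 := by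
            apply mul_le_mul_of_nonneg_right hmin h2.le
        _ = Qr A x := by field_simp
    calc Qr A (fun i => x₀ i) * ∑ i, x i ^ 2 = Qr A (fun i => x₀ i) * s ^ 2 := by rw [hs2]
      _ ≤ Qr A x := this

lemma exists_min (A : Matrix (Fin (k+1)) (Fin (k+1)) ℝ) (hA : PD A) :
    ∃ v : Fin (k+1) → ℤ, v ≠ 0 ∧ ∀ w : Fin (k+1) → ℤ, w ≠ 0 → Qi A v ≤ Qi A w := by
  obtain ⟨ε, hε, hco⟩ := exists_coercive A hA
  set e : Fin (k+1) → ℤ := Pi.single 0 1 with he_def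
  have he : e ≠ 0 := by
    intro h
    have := congrFun h 0
    simp [he_def] at this
  set c : ℝ := Qi A e with hc_def
  set S : Set (Fin (k+1) → ℤ) := {v | v ≠ 0 ∧ Qi A v ≤ c} with hS_def
  have heS : e ∈ S := ⟨he, le_refl _⟩
  obtain ⟨N, hN⟩ := exists_nat_gt (c / ε)
  have hfin : S.Finite := by
    have hsub : S ⊆ Set.pi Set.univ (fun _ : Fin (k+1) => Set.Icc (-(N:ℤ)) N) := by
      intro v ⟨hv0, hvc⟩
      intro i _
      simp only [Set.mem_Icc]
      by_contra hcon
      have habs : (N:ℤ) + 1 ≤ |v i| := by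
        rcases abs_cases (v i) with ⟨h, _⟩ | ⟨h, _⟩ <;> omega
      have h1 : ((N:ℝ) + 1) ≤ |(v i : ℝ)| := by
        have : ((N:ℤ) + 1 : ℝ) ≤ |(v i : ℝ)| := by
          rw [← Int.cast_abs]
          exact_mod_cast habs
        simpa using this
      have h2 : ((N:ℝ)) < (v i : ℝ) ^ 2 := by
        have hN1 : (0:ℝ) ≤ (N:ℝ) + 1 := by positivity
        nlinarith [sq_abs ((v i : ℝ))]
      have h3 : (v i : ℝ) ^ 2 ≤ ∑ j, (v j : ℝ) ^ 2 :=
        Finset.single_le_sum (f := fun j => (v j : ℝ) ^ 2) (fun j _ => by positivity)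
          (Finset.mem_univ i)
      have h4 := hco (fun j => (v j : ℝ))
      have h5 : Qi A v ≤ c := hvc
      have : ε * (v i : ℝ) ^ 2 ≤ c := by
        calc ε * (v i : ℝ) ^ 2 ≤ ε * ∑ j, (v j : ℝ) ^ 2 := by nlinarith
          _ ≤ Qr A (fun j => (v j : ℝ)) := h4
          _ = Qi A v := rfl
          _ ≤ c := h5
      have hclt : c / ε < (N:ℝ) := hN
      have : (v i : ℝ) ^ 2 ≤ c / ε := by
        rw [le_div_iff₀ hε]
        linarith
      linarith
    exact Set.Finite.subset (Set.Finite.pi (fun _ => Set.finite_Icc _ _)) hsub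
  obtain ⟨v, hvS, hvmin⟩ := Set.Finite.exists_minimalFor (Qi A) S hfin ⟨e, heS⟩
  refine ⟨v, hvS.1, ?_⟩
  intro w hw
  by_cases hwc : Qi A w ≤ c
  · have hwS : w ∈ S := ⟨hw, hwc⟩
    by_contra hlt
    push_neg at hlt
    exact absurd (hvmin hwS hlt.le) (not_le.mpr hlt)
  · push_neg at hwc
    exact le_trans hvS.2 hwc.le

lemma exists_unimodular {m : ℕ} (v : Fin m → ℤ) (hv : v ≠ 0)
    (hprim : ∀ (d : ℤ) (w : Fin m → ℤ), v = d • w → IsUnit d) (j₀ : Fin m) :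
    ∃ U : Matrix (Fin m) (Fin m) ℤ, IsUnit U.det ∧ ∀ i, U i j₀ = v i := by
  classical
  set N : Submodule ℤ (Fin m → ℤ) := Submodule.span ℤ {v} with hN_def
  obtain ⟨n, snf⟩ := N.smithNormalForm (Pi.basisFun ℤ (Fin m))
  have e1 : ℤ ≃ₗ[ℤ] N := LinearEquiv.toSpanNonzeroSingleton ℤ _ v hv
  have hn : n = 1 := by
    have h1 : Module.finrank ℤ N = n := by
      rw [Module.finrank_eq_card_basis snf.bN, Fintype.card_fin]
    have h2 : Module.finrank ℤ N = 1 := by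
      rw [Module.finrank_eq_card_basis (((Module.Basis.singleton PUnit.{1} ℤ)).map e1)]
      simp
    omega
  subst hn
  have hvmem : v ∈ N := Submodule.mem_span_singleton_self v
  set vN : N := ⟨v, hvmem⟩ with hvN_def
  have hrepr : vN = snf.bN.repr vN 0 • snf.bN 0 := by
    conv_lhs => rw [← snf.bN.sum_repr vN]
    rw [Fin.sum_univ_one]
  set c : ℤ := snf.bN.repr vN 0 with hc_def
  have hvc : v = (c * snf.a 0) • snf.bM (snf.f 0) := by
    have h1 : (vN : Fin m → ℤ) = c • (snf.bN 0 : Fin m → ℤ) := by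
      rw [hrepr]; rfl
    rw [snf.snf 0] at h1
    rw [hvN_def] at h1
    have h2 : v = c • snf.a 0 • snf.bM (snf.f 0) := h1
    rw [h2, smul_smul]
  have hu : IsUnit (c * snf.a 0) := hprim _ _ hvc
  obtain ⟨u, hu_eq⟩ := hu
  set b1 : Module.Basis (Fin m) ℤ (Fin m → ℤ) :=
    snf.bM.unitsSMul (fun i => if i = snf.f 0 then u else 1) with hb1_def
  have hb1 : b1 (snf.f 0) = v := by
    rw [hb1_def, Module.Basis.unitsSMul_apply]
    simp only [if_true, Units.smul_def, hu_eq]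
    exact hvc.symm
  set b2 := b1.reindex (Equiv.swap (snf.f 0) j₀) with hb2_def
  have hb2 : b2 j₀ = v := by
    rw [hb2_def, Module.Basis.reindex_apply, Equiv.symm_swap, Equiv.swap_apply_right, hb1]
  set U := (Pi.basisFun ℤ (Fin m)).toMatrix b2 with hU_def
  haveI := (Pi.basisFun ℤ (Fin m)).invertibleToMatrix b2
  refine ⟨U, Matrix.isUnit_det_of_invertible U, ?_⟩
  intro i
  rw [hU_def, Module.Basis.toMatrix_apply, hb2, Pi.basisFun_repr]

lemma Qr_single (A : Matrix (Fin k) (Fin k) ℝ) (j : Fin k) : Qr A (Pi.single j 1) = A j j := by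
  rw [Qr_expand]
  rw [Finset.sum_eq_single j]
  · rw [Finset.sum_eq_single j]
    · simp
    · intro b _ hb; simp [Pi.single_apply, hb]
    · simp
  · intro b _ hb
    rw [Finset.sum_eq_single j]
    · simp [Pi.single_apply, hb]
    · intro c _ hc; simp [Pi.single_apply, hc]
    · simp
  · simp

/-- The Schur complement matrix w.r.t. the last diagonal entry. -/
noncomputable def schurC {n : ℕ} (B : Matrix (Fin (n+1)) (Fin (n+1)) ℝ) :
    Matrix (Fin n) (Fin n) ℝ :=
  fun (i j : Fin n) => B i.castSucc j.castSucc -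
    B (Fin.last n) i.castSucc * B (Fin.last n) j.castSucc / B (Fin.last n) (Fin.last n)

lemma schur_aux {n : ℕ} (M : Matrix (Fin n) (Fin n) ℝ) (L : Fin n → ℝ) {μ : ℝ} (hμ : μ ≠ 0)
    (t : ℝ) (y : Fin n → ℝ) :
    (∑ i, ((∑ j, y i * M i j * y j) + y i * L i * t)) + ((∑ j, t * L j * y j) + t * μ * t)
      = μ * (t + ∑ i, (L i / μ) * y i) ^ 2
        + ∑ i, ∑ j, y i * (M i j - L i * L j / μ) * y j := by
  have e1 : ∑ i, ((∑ j, y i * M i j * y j) + y i * L i * t)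
      = (∑ i, ∑ j, y i * M i j * y j) + ∑ i, y i * L i * t := Finset.sum_add_distrib
  have e2 : ∑ i, ∑ j, y i * (M i j - L i * L j / μ) * y j
      = (∑ i, ∑ j, y i * M i j * y j) - (∑ i, y i * L i) * (∑ j, L j * y j / μ) := by
    have h : ∀ i j, y i * (M i j - L i * L j / μ) * y j
        = y i * M i j * y j - (y i * L i) * (L j * y j / μ) := fun i j => by ring
    simp only [h, Finset.sum_sub_distrib, ← Finset.sum_mul_sum]
  have e3 : (∑ i, y i * L i * t) = (∑ i, y i * L i) * t := by
    rw [Finset.sum_mul]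
  have e4 : (∑ j, t * L j * y j) = t * ∑ j, y j * L j := by
    rw [Finset.mul_sum]
    exact Finset.sum_congr rfl fun j _ => by ring
  have e5 : (∑ j, L j * y j / μ) = (∑ j, y j * L j) / μ := by
    rw [Finset.sum_div]
    exact Finset.sum_congr rfl fun j _ => by ring
  have e6 : (∑ i, (L i / μ) * y i) = (∑ j, y j * L j) / μ := by
    rw [Finset.sum_div]
    exact Finset.sum_congr rfl fun j _ => by ring
  rw [e1, e2, e3, e4, e5, e6]
  generalize (∑ i, ∑ j, y i * M i j * y j) = P
  generalize (∑ j, y j * L j) = a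
  field_simp
  ring

lemma schur_identity {n : ℕ} (B : Matrix (Fin (n+1)) (Fin (n+1)) ℝ) (hsymm : B.IsSymm)
    (hμ : B (Fin.last n) (Fin.last n) ≠ 0) (x : Fin (n+1) → ℝ) :
    Qr B x = B (Fin.last n) (Fin.last n) *
        (x (Fin.last n) + ∑ i : Fin n, (B (Fin.last n) i.castSucc / B (Fin.last n) (Fin.last n)) *
          x i.castSucc) ^ 2
      + Qr (schurC B) (fun i => x i.castSucc) := by
  have hsym' : ∀ i : Fin n, B i.castSucc (Fin.last n) = B (Fin.last n) i.castSucc := by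
    intro i
    have h := congrFun (congrFun hsymm i.castSucc) (Fin.last n)
    simpa using h.symm
  rw [Qr_expand, Qr_expand]
  simp only [Fin.sum_univ_castSucc, hsym']
  exact schur_aux (fun (i j : Fin n) => B i.castSucc j.castSucc)
    (fun i => B (Fin.last n) i.castSucc) hμ (x (Fin.last n)) (fun i => x i.castSucc)

lemma schurC_symm {n : ℕ} {B : Matrix (Fin (n+1)) (Fin (n+1)) ℝ} (hsymm : B.IsSymm) :
    (schurC B).IsSymm := by
  unfold Matrix.IsSymm
  ext i j
  have h := congrFun (congrFun hsymm j.castSucc) i.castSucc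
  simp only [transpose_apply] at h ⊢
  simp only [schurC, h]
  ring

lemma schurC_PD {n : ℕ} {B : Matrix (Fin (n+1)) (Fin (n+1)) ℝ} (hsymm : B.IsSymm)
    (hB : PD B) : PD (schurC B) := by
  have hμpos : 0 < B (Fin.last n) (Fin.last n) := by
    have h := hB (Pi.single (Fin.last n) 1) (by
      intro h0
      have := congrFun h0 (Fin.last n)
      simp at this)
    rwa [Qr_single] at h
  intro y hy
  set S : ℝ := ∑ i : Fin n, (B (Fin.last n) i.castSucc / B (Fin.last n) (Fin.last n)) * y i with hS
  set x : Fin (n+1) → ℝ := Fin.snoc y (-S) with hx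
  have hxc : ∀ i : Fin n, x i.castSucc = y i := fun i => Fin.snoc_castSucc _ _ _
  have hxl : x (Fin.last n) = -S := Fin.snoc_last _ _
  have hxne : x ≠ 0 := by
    obtain ⟨i, hi⟩ : ∃ i, y i ≠ 0 := by
      by_contra h; push_neg at h; exact hy (funext h)
    intro h0
    apply hi
    rw [← hxc i, h0]
    rfl
  have hid := schur_identity B hsymm hμpos.ne' x
  have hsq : (x (Fin.last n) + ∑ i : Fin n, (B (Fin.last n) i.castSucc / B (Fin.last n) (Fin.last n)) *
      x i.castSucc) = 0 := by
    rw [hxl]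
    have : (∑ i : Fin n, (B (Fin.last n) i.castSucc / B (Fin.last n) (Fin.last n)) * x i.castSucc) = S := by
      rw [hS]
      exact Finset.sum_congr rfl fun i _ => by rw [hxc i]
    rw [this]
    ring
  rw [hsq] at hid
  have hyx : (fun i => x i.castSucc) = y := funext hxc
  rw [hyx] at hid
  have := hB x hxne
  rw [hid] at this
  simpa using this

lemma det_schur {n : ℕ} (B : Matrix (Fin (n+1)) (Fin (n+1)) ℝ) (hsymm : B.IsSymm)
    (hμ : B (Fin.last n) (Fin.last n) ≠ 0) :
    B.det = B (Fin.last n) (Fin.last n) * (schurC B).det := by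
  classical
  set μ := B (Fin.last n) (Fin.last n) with hμdef
  set e : Fin n ⊕ Fin 1 ≃ Fin (n+1) := finSumFinEquiv with he
  have h1 : ∀ i : Fin n, e (Sum.inl i) = i.castSucc := by
    intro i; rfl
  have h2 : ∀ i : Fin 1, e (Sum.inr i) = Fin.last n := by
    intro i
    have : i = 0 := Subsingleton.elim _ _
    subst this
    apply Fin.ext
    simp [he, finSumFinEquiv]
  have hsym' : ∀ i : Fin n, B i.castSucc (Fin.last n) = B (Fin.last n) i.castSucc := by
    intro i
    have h := congrFun (congrFun hsymm i.castSucc) (Fin.last n)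
    simpa using h.symm
  set D : Matrix (Fin 1) (Fin 1) ℝ := Matrix.of fun _ _ => μ with hD
  have hDdet : IsUnit D.det := by
    rw [Matrix.det_fin_one]
    exact (isUnit_iff_ne_zero).mpr hμ
  haveI : Invertible D := D.invertibleOfIsUnitDet hDdet
  have hDinv : (⅟D) 0 0 = μ⁻¹ := by
    have h := mul_invOf_self D
    have h00 := congrFun (congrFun h 0) 0
    rw [Matrix.mul_apply, Fin.sum_univ_one] at h00
    have hD00 : D 0 0 = μ := rfl
    rw [hD00] at h00
    have hone : (1 : Matrix (Fin 1) (Fin 1) ℝ) 0 0 = 1 := by simp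
    rw [hone] at h00
    exact eq_inv_of_mul_eq_one_right h00
  have hblock : B.submatrix e e = Matrix.fromBlocks
      (Matrix.of fun (i j : Fin n) => B i.castSucc j.castSucc)
      (Matrix.of fun (i : Fin n) (_ : Fin 1) => B (Fin.last n) i.castSucc)
      (Matrix.of fun (_ : Fin 1) (j : Fin n) => B (Fin.last n) j.castSucc)
      D := by
    ext i j
    rcases i with i | i <;> rcases j with j | j <;>
      simp only [Matrix.submatrix_apply, h1, h2, Matrix.fromBlocks, Matrix.of_apply,
        Sum.elim_inl, Sum.elim_inr, hD] <;>
      first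
        | rfl
        | (exact hsym' _)
  have hdet : B.det = (B.submatrix e e).det := (Matrix.det_submatrix_equiv_self e B).symm
  rw [hdet, hblock, Matrix.det_fromBlocks₂₂]
  have hDd : D.det = μ := Matrix.det_fin_one_of _
  rw [hDd]
  congr 1
  congr 1
  ext i j
  rw [Matrix.sub_apply]
  have hQR : (Matrix.of (fun (i : Fin n) (_ : Fin 1) => B (Fin.last n) i.castSucc) * ⅟D *
      Matrix.of fun (_ : Fin 1) (j : Fin n) => B (Fin.last n) j.castSucc) i j
      = B (Fin.last n) i.castSucc * μ⁻¹ * B (Fin.last n) j.castSucc := by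
    rw [Matrix.mul_apply, Fin.sum_univ_one, Matrix.mul_apply, Fin.sum_univ_one, hDinv]
    rfl
  rw [hQR]
  simp only [schurC, Matrix.of_apply]
  ring

lemma Qr_congr (V : Matrix (Fin k) (Fin k) ℝ) (A : Matrix (Fin k) (Fin k) ℝ) (x : Fin k → ℝ) :
    Qr (Vᵀ * A * V) x = Qr A (V *ᵥ x) := by
  unfold Qr
  rw [show Vᵀ * A * V = Vᵀ * (A * V) from by rw [Matrix.mul_assoc]]
  rw [← Matrix.mulVec_mulVec, ← Matrix.mulVec_mulVec]
  rw [Matrix.dotProduct_mulVec x Vᵀ, Matrix.vecMul_transpose]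

lemma cast_mulVec (U : Matrix (Fin k) (Fin k) ℤ) (w : Fin k → ℤ) :
    (fun i => ((U *ᵥ w) i : ℝ)) = (U.map (Int.cast : ℤ → ℝ)) *ᵥ (fun i => (w i : ℝ)) := by
  funext i
  simp only [Matrix.mulVec, dotProduct, Matrix.map_apply]
  push_cast
  rfl

lemma Qi_congr (U : Matrix (Fin k) (Fin k) ℤ) (A : Matrix (Fin k) (Fin k) ℝ) (w : Fin k → ℤ) :
    Qi ((U.map (Int.cast : ℤ → ℝ))ᵀ * A * U.map (Int.cast : ℤ → ℝ)) w = Qi A (U *ᵥ w) := by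
  unfold Qi
  rw [Qr_congr, cast_mulVec]

lemma mulVec_ne_zero_int {U : Matrix (Fin k) (Fin k) ℤ} (hU : IsUnit U.det)
    {w : Fin k → ℤ} (hw : w ≠ 0) : U *ᵥ w ≠ 0 := by
  haveI := U.invertibleOfIsUnitDet hU
  intro h
  apply hw
  have : (⅟U) *ᵥ (U *ᵥ w) = w := by
    rw [Matrix.mulVec_mulVec, invOf_mul_self, Matrix.one_mulVec]
  rw [h, Matrix.mulVec_zero] at this
  exact this.symm

lemma mulVec_ne_zero_real {V : Matrix (Fin k) (Fin k) ℝ} (hV : IsUnit V.det)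
    {x : Fin k → ℝ} (hx : x ≠ 0) : V *ᵥ x ≠ 0 := by
  haveI := V.invertibleOfIsUnitDet hV
  intro h
  apply hx
  have : (⅟V) *ᵥ (V *ᵥ x) = x := by
    rw [Matrix.mulVec_mulVec, invOf_mul_self, Matrix.one_mulVec]
  rw [h, Matrix.mulVec_zero] at this
  exact this.symm

lemma det_map_int (U : Matrix (Fin k) (Fin k) ℤ) :
    (U.map (Int.cast : ℤ → ℝ)).det = ((U.det : ℤ) : ℝ) := by
  have h := (Int.castRingHom ℝ).map_det U
  have h2 : (Int.castRingHom ℝ).mapMatrix U = U.map (Int.cast : ℤ → ℝ) := rfl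
  rw [h2] at h
  exact h.symm

lemma single_ne_zero' (j : Fin k) : (Pi.single j 1 : Fin k → ℤ) ≠ 0 := by
  intro h
  have := congrFun h j
  simp at this

lemma Qi_single (A : Matrix (Fin k) (Fin k) ℝ) (j : Fin k) :
    Qi A (Pi.single j 1) = A j j := by
  unfold Qi
  have h : (fun i => (((Pi.single j 1 : Fin k → ℤ)) i : ℝ)) = Pi.single j 1 := by
    funext i
    rcases eq_or_ne i j with rfl | hij
    · simp
    · simp [Pi.single_apply, hij]
  rw [h, Qr_single]

lemma exp_arith (n : ℕ) : (n+2)*(n+1)/2 = (n+1) + (n+1)*n/2 := by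
  have h : (n+2)*(n+1) = 2*(n+1) + (n+1)*n := by ring
  rw [h, Nat.mul_add_div (by norm_num)]

theorem key_bound : ∀ (n : ℕ) (B : Matrix (Fin (n+1)) (Fin (n+1)) ℝ), B.IsSymm → PD B →
    ∀ v : Fin (n+1) → ℤ, v ≠ 0 → (∀ w : Fin (n+1) → ℤ, w ≠ 0 → Qi B v ≤ Qi B w) →
    (Qi B v)^(n+1) ≤ (4/3 : ℝ)^((n+1)*n/2) * B.det := by
  intro n
  induction n with
  | zero =>
    intro B hsymm hPD v hv hmin
    have h1 : Qi B v ≤ Qi B (Pi.single 0 1) := hmin _ (single_ne_zero' 0)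
    rw [Qi_single] at h1
    have hdet : B.det = B 0 0 := Matrix.det_fin_one B
    calc (Qi B v)^(0+1) = Qi B v := pow_one _
      _ ≤ B 0 0 := h1
      _ = (4/3:ℝ)^((0+1)*0/2) * B.det := by rw [hdet]; norm_num
  | succ n IH =>
    intro B hsymm hPD v hv hmin
    set μ := Qi B v with hμdef
    have hμpos : 0 < μ := Qi_pos hPD hv
    have hprim : ∀ (d : ℤ) (w : Fin (n+2) → ℤ), v = d • w → IsUnit d := by
      intro d w hdw
      have hd0 : d ≠ 0 := by
        rintro rfl
        rw [zero_smul] at hdw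
        exact hv hdw
      have hw0 : w ≠ 0 := by
        rintro rfl
        rw [smul_zero] at hdw
        exact hv hdw
      have hcast : (fun i => (v i : ℝ)) = (d:ℝ) • (fun i => (w i : ℝ)) := by
        funext i
        rw [hdw]
        simp
      have hQ : Qi B v = (d:ℝ)^2 * Qi B w := by
        unfold Qi
        rw [hcast, Qr_smul]
      have hmin' := hmin w hw0
      have hQwpos : 0 < Qi B w := Qi_pos hPD hw0
      have hd2 : (d:ℝ)^2 ≤ 1 := by nlinarith
      have hd2' : d^2 ≤ 1 := by exact_mod_cast hd2
      have h1 : 1 ≤ |d| := Int.one_le_abs hd0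
      have habs : |d| = 1 := by nlinarith [sq_abs d]
      rw [Int.isUnit_iff]
      rcases (abs_eq (by norm_num : (0:ℤ) ≤ 1)).mp habs with h | h
      · left; exact h
      · right; exact h
    obtain ⟨U, hUdet, hUcol⟩ := exists_unimodular v hv hprim (Fin.last (n+1))
    set V : Matrix (Fin (n+2)) (Fin (n+2)) ℝ := U.map (Int.cast : ℤ → ℝ) with hV
    set B' := Vᵀ * B * V with hB'
    have hVdet : IsUnit V.det := by
      rw [hV, det_map_int]
      exact hUdet.map (Int.castRingHom ℝ)
    have hB'symm : B'.IsSymm := by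
      unfold Matrix.IsSymm at hsymm ⊢
      rw [hB', Matrix.transpose_mul, Matrix.transpose_mul, Matrix.transpose_transpose,
        hsymm, Matrix.mul_assoc]
    have hB'PD : PD B' := by
      intro x hx
      rw [hB', Qr_congr]
      exact hPD _ (mulVec_ne_zero_real hVdet hx)
    have hQi' : ∀ w, Qi B' w = Qi B (U *ᵥ w) := by
      intro w
      rw [hB', hV]
      exact Qi_congr U B w
    have hB'min : ∀ w, w ≠ 0 → μ ≤ Qi B' w := by
      intro w hw
      rw [hQi']
      exact hmin _ (mulVec_ne_zero_int hUdet hw)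
    have hUe : U *ᵥ (Pi.single (Fin.last (n+1)) 1) = v := by
      rw [Matrix.mulVec_single]
      funext i
      simp [hUcol i]
    have hB'v : Qi B' (Pi.single (Fin.last (n+1)) 1) = μ := by
      rw [hQi', hUe, hμdef]
    have hB'entry : B' (Fin.last (n+1)) (Fin.last (n+1)) = μ := by
      rw [← Qi_single B' (Fin.last (n+1))]
      exact hB'v
    have hμne : B' (Fin.last (n+1)) (Fin.last (n+1)) ≠ 0 := by
      rw [hB'entry]; exact hμpos.ne'
    have hdetB' : B'.det = B.det := by
      rw [hB', Matrix.det_mul, Matrix.det_mul, Matrix.det_transpose]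
      have h1 : V.det = 1 ∨ V.det = -1 := by
        rw [hV, det_map_int]
        rcases Int.isUnit_iff.mp hUdet with h | h
        · left; rw [h]; norm_num
        · right; rw [h]; norm_num
      rcases h1 with h | h <;> rw [h] <;> ring
    set C := schurC B' with hC
    have hCsymm : C.IsSymm := schurC_symm hB'symm
    have hCPD : PD C := schurC_PD hB'symm hB'PD
    have hdetC : B'.det = μ * C.det := by
      rw [det_schur B' hB'symm hμne, hB'entry]
    obtain ⟨w₀, hw₀, hw₀min⟩ := exists_min C hCPD
    set ν := Qi C w₀ with hν
    have hνpos : 0 < ν := Qi_pos hCPD hw₀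
    have hIH := IH C hCsymm hCPD w₀ hw₀ hw₀min
    set S : ℝ := ∑ i : Fin (n+1),
      (B' (Fin.last (n+1)) i.castSucc / B' (Fin.last (n+1)) (Fin.last (n+1))) * (w₀ i : ℝ)
      with hS
    set r : ℤ := round (-S) with hr
    set x : Fin (n+2) → ℤ := Fin.snoc w₀ r with hx
    have hxc : ∀ i : Fin (n+1), x i.castSucc = w₀ i := fun i => Fin.snoc_castSucc _ _ _
    have hxl : x (Fin.last (n+1)) = r := Fin.snoc_last _ _
    have hxne : x ≠ 0 := by
      obtain ⟨i, hi⟩ : ∃ i, w₀ i ≠ 0 := by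
        by_contra h; push_neg at h; exact hw₀ (funext h)
      intro h0
      apply hi
      rw [← hxc i, h0]
      rfl
    have habs : |(r : ℝ) + S| ≤ 1/2 := by
      have h := abs_sub_round (-S)
      rw [hr]
      rw [show -S - ((round (-S) : ℤ) : ℝ) = -(((round (-S) : ℤ):ℝ) + S) from by ring, abs_neg] at h
      exact h
    have hid := schur_identity B' hB'symm hμne (fun i => (x i : ℝ))
    have hid2 : Qi B' x = μ * ((r:ℝ) + S)^2 + ν := by
      unfold Qi
      rw [hid, hB'entry, hxl]
      have hsum : (∑ i : Fin (n+1),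
          B' (Fin.last (n+1)) i.castSucc / μ * ((x i.castSucc : ℤ) : ℝ)) = S := by
        rw [hS, hB'entry]
        exact Finset.sum_congr rfl fun i _ => by rw [hxc i]
      have hcomp : (fun i : Fin (n+1) => ((x i.castSucc : ℤ) : ℝ)) = (fun i => (w₀ i : ℝ)) := by
        funext i; rw [hxc i]
      rw [hsum, hcomp, hν]
      rfl
    have hstep : μ ≤ μ * ((r:ℝ) + S)^2 + ν := by
      rw [← hid2]
      exact hB'min x hxne
    have ht2 : ((r:ℝ) + S)^2 ≤ 1/4 := by
      nlinarith [habs, abs_nonneg ((r:ℝ)+S), sq_abs ((r:ℝ)+S)]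
    have h34 : μ ≤ (4/3:ℝ) * ν := by
      have hmt : μ * ((r:ℝ) + S)^2 ≤ μ * (1/4) := mul_le_mul_of_nonneg_left ht2 hμpos.le
      linarith
    have hμν : μ^(n+1) ≤ (4/3:ℝ)^(n+1) * ν^(n+1) := by
      calc μ^(n+1) ≤ ((4/3:ℝ)*ν)^(n+1) := pow_le_pow_left₀ hμpos.le h34 (n+1)
        _ = (4/3:ℝ)^(n+1) * ν^(n+1) := mul_pow _ _ _
    have h2 : μ^(n+1) * μ ≤ ((4/3:ℝ)^(n+1) * ν^(n+1)) * μ :=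
      mul_le_mul_of_nonneg_right hμν hμpos.le
    have h4 : ((4/3:ℝ)^(n+1) * ν^(n+1)) * μ
        ≤ ((4/3:ℝ)^(n+1) * ((4/3:ℝ)^((n+1)*n/2) * C.det)) * μ := by
      apply mul_le_mul_of_nonneg_right _ hμpos.le
      apply mul_le_mul_of_nonneg_left hIH (by positivity)
    have h5 : ((4/3:ℝ)^(n+1) * ((4/3:ℝ)^((n+1)*n/2) * C.det)) * μ
        = (4/3:ℝ)^((n+2)*(n+1)/2) * B.det := by
      rw [exp_arith n, pow_add, ← hdetB', hdetC]
      ring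
    calc μ^(n+1+1) = μ^(n+1) * μ := by ring
      _ ≤ ((4/3:ℝ)^(n+1) * ν^(n+1)) * μ := h2
      _ ≤ ((4/3:ℝ)^(n+1) * ((4/3:ℝ)^((n+1)*n/2) * C.det)) * μ := h4
      _ = (4/3:ℝ)^((n+2)*(n+1)/2) * B.det := h5
      _ = (4/3:ℝ)^((n+1+1)*(n+1)/2) * B.det := by norm_num

end HermiteAux

open HermiteAux

/-- Hermite's theorem on the minimum of a positive definite quadratic form:
for a symmetric positive definite real `m × m` matrix `A` with determinant `D`,
there is a nonzero integer vector `v` with `0 < vᵀ A v ≤ (4/3)^((m-1)/2) * D^(1/m)`. -/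
theorem hermite_minimum_of_posdef_quadratic_form
    (m : ℕ) (hm : 1 ≤ m) (A : Matrix (Fin m) (Fin m) ℝ)
    (hsymm : A.IsSymm) (hpd : A.PosDef) :
    ∃ v : Fin m → ℤ, v ≠ 0 ∧
      0 < (fun i => (v i : ℝ)) ⬝ᵥ A.mulVec (fun i => (v i : ℝ)) ∧
      (fun i => (v i : ℝ)) ⬝ᵥ A.mulVec (fun i => (v i : ℝ)) ≤
        (4 / 3 : ℝ) ^ (((m : ℝ) - 1) / 2) * A.det ^ ((1 : ℝ) / (m : ℝ)) := by
  obtain ⟨n, rfl⟩ : ∃ n, m = n + 1 := ⟨m - 1, by omega⟩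
  have hPD : PD A := by
    intro x hx
    have := hpd.dotProduct_mulVec_pos hx
    simp at this; exact this
  have hD : 0 < A.det := hpd.det_pos
  obtain ⟨v, hv, hmin⟩ := exists_min A hPD
  refine ⟨v, hv, Qi_pos hPD hv, ?_⟩
  have hkey := key_bound n A hsymm hPD v hv hmin
  set μ := Qi A v with hμ
  have hμpos : 0 < μ := Qi_pos hPD hv
  set e : ℕ := (n+1)*n/2 with he
  have hdvd : 2 ∣ (n+1)*n := by
    rcases Nat.even_mul_succ_self n with ⟨c, hc⟩
    exact ⟨c, by rw [Nat.mul_comm]; omega⟩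
  have h2e : e * 2 = (n+1)*n := Nat.div_mul_cancel hdvd
  have h2er : (e:ℝ) * 2 = ((n:ℝ)+1) * n := by exact_mod_cast h2e
  have hc : ((n:ℝ)+1) ≠ 0 := by positivity
  -- take rpow (1/(n+1)) of both sides
  have hmono : (μ^(n+1) : ℝ) ^ ((1:ℝ)/((n:ℝ)+1)) ≤ ((4/3:ℝ)^e * A.det) ^ ((1:ℝ)/((n:ℝ)+1)) :=
    Real.rpow_le_rpow (by positivity) hkey (by positivity)
  have hLHS : (μ^(n+1) : ℝ) ^ ((1:ℝ)/((n:ℝ)+1)) = μ := by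
    rw [← Real.rpow_natCast μ (n+1), ← Real.rpow_mul hμpos.le]
    rw [show (((n+1:ℕ)):ℝ) * ((1:ℝ)/((n:ℝ)+1)) = 1 by push_cast; field_simp]
    exact Real.rpow_one μ
  have hRHS : ((4/3:ℝ)^e * A.det) ^ ((1:ℝ)/((n:ℝ)+1))
      = (4/3:ℝ) ^ ((((n:ℝ)+1) - 1) / 2) * A.det ^ ((1:ℝ)/((n:ℝ)+1)) := by
    rw [Real.mul_rpow (by positivity) hD.le]
    congr 1
    rw [← Real.rpow_natCast (4/3:ℝ) e, ← Real.rpow_mul (by norm_num)]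
    congr 1
    have hexp : (e:ℝ) * ((1:ℝ)/((n:ℝ)+1)) = (((n:ℝ)+1) - 1) / 2 := by
      field_simp
      linarith [h2er]
    exact hexp
  rw [hLHS, hRHS] at hmono
  have hgoal : μ ≤ (4/3:ℝ) ^ ((((n:ℝ)+1) - 1) / 2) * A.det ^ ((1:ℝ)/((n:ℝ)+1)) := hmono
  show μ ≤ _
  push_cast
  exact hgoal
end

section
/- Let f(x,y) = ax² + 2bxy + cy² be a positive definite binary quadratic form with integer coefficients a, b, c and determinant D = ac − b² > 0. Then there exists a matrix P ∈ GL₂(ℤ) such that the transformed form F, given by the matrix Pᵀ (a b; b c) P, has first coefficient A = F(1,0) satisfying 0 < A ≤ 2√(D/3). -/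
open Matrix

private lemma gauss_aux : ∀ n : ℕ, ∀ a b c : ℤ, a.toNat ≤ n → 0 < a → 0 < a * c - b ^ 2 →
    ∃ P : Matrix (Fin 2) (Fin 2) ℤ, IsUnit P.det ∧
      0 < (Pᵀ * !![a, b; b, c] * P) 0 0 ∧
      3 * ((Pᵀ * !![a, b; b, c] * P) 0 0) ^ 2 ≤ 4 * (a * c - b ^ 2) := by
  intro n
  induction n with
  | zero => intro a b c hn ha _; omega
  | succ n ih =>
    intro a b c hn ha hD
    set q : ℤ := b / a with hq
    have hmod : b % a + a * (b / a) = b := Int.emod_add_mul_ediv b a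
    have hr0 : 0 ≤ b % a := Int.emod_nonneg b (ne_of_gt ha)
    have hra : b % a < a := Int.emod_lt_of_pos b ha
    set t : ℤ := if 2 * (b % a) ≤ a then -q else -q - 1 with ht
    set b' : ℤ := b + a * t with hb'
    have hb'bound : -a ≤ 2 * b' ∧ 2 * b' ≤ a := by
      rcases le_or_gt (2 * (b % a)) a with h | h
      · have : t = -q := by simp [ht, h]
        constructor <;> [nlinarith [hmod, hr0, this]; nlinarith [hmod, this]]
      · have : t = -q - 1 := by simp [ht, not_le.mpr h]
        constructor <;> [nlinarith [hmod, this]; nlinarith [hmod, hra, this]]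
    set c' : ℤ := a * t ^ 2 + 2 * b * t + c with hc'
    have hinv : a * c' - b' ^ 2 = a * c - b ^ 2 := by simp [hc', hb']; ring
    have htr1 : !![(1:ℤ), t; 0, 1]ᵀ = !![1, 0; t, 1] := by
      ext i j; fin_cases i <;> fin_cases j <;> simp
    have hM1 : !![(1:ℤ), t; 0, 1]ᵀ * !![a, b; b, c] * !![1, t; 0, 1] = !![a, b'; b', c'] := by
      rw [htr1]
      ext i j
      fin_cases i <;> fin_cases j <;>
        simp [Matrix.mul_apply, Fin.sum_univ_two, hb', hc'] <;> ring
    rcases le_or_gt a c' with hle | hlt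
    · refine ⟨!![1, t; 0, 1], ?_, ?_, ?_⟩
      · simp [Matrix.det_fin_two_of]
      · rw [hM1]; simpa using ha
      · rw [hM1]
        have h00 : (!![a, b'; b', c'] : Matrix (Fin 2) (Fin 2) ℤ) 0 0 = a := by simp
        rw [h00]
        nlinarith [hb'bound.1, hb'bound.2, hinv, hle, ha]
    · have hc'pos : 0 < c' := by nlinarith [hinv, sq_nonneg b', ha]
      have hn' : c'.toNat ≤ n := by omega
      have hD' : 0 < c' * a - b' ^ 2 := by nlinarith [hinv]
      obtain ⟨P', hP'det, hP'pos, hP'bd⟩ := ih c' b' a hn' hc'pos hD'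
      refine ⟨!![1, t; 0, 1] * !![0, 1; 1, 0] * P', ?_, ?_, ?_⟩
      · rw [Matrix.det_mul, Matrix.det_mul]
        simp only [Matrix.det_fin_two_of]
        refine IsUnit.mul (IsUnit.mul ?_ ?_) hP'det <;> norm_num
      all_goals {
        have key : (!![(1:ℤ), t; 0, 1] * !![0, 1; 1, 0] * P')ᵀ * !![a, b; b, c] *
            (!![1, t; 0, 1] * !![0, 1; 1, 0] * P') = P'ᵀ * !![c', b'; b', a] * P' := by
          have htr2 : !![(0:ℤ), 1; 1, 0]ᵀ = !![0, 1; 1, 0] := by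
            ext i j; fin_cases i <;> fin_cases j <;> simp
          have h2 : !![(0:ℤ), 1; 1, 0]ᵀ * !![a, b'; b', c'] * !![0, 1; 1, 0] =
              !![c', b'; b', a] := by
            rw [htr2]
            ext i j
            fin_cases i <;> fin_cases j <;>
              simp [Matrix.mul_apply, Fin.sum_univ_two]
          rw [Matrix.transpose_mul, Matrix.transpose_mul]
          calc P'ᵀ * (!![(0:ℤ), 1; 1, 0]ᵀ * !![1, t; 0, 1]ᵀ) * !![a, b; b, c] *
                (!![1, t; 0, 1] * !![0, 1; 1, 0] * P')
              = P'ᵀ * (!![(0:ℤ), 1; 1, 0]ᵀ * (!![1, t; 0, 1]ᵀ * !![a, b; b, c] *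
                !![1, t; 0, 1]) * !![0, 1; 1, 0]) * P' := by
                simp only [Matrix.mul_assoc]
            _ = P'ᵀ * !![c', b'; b', a] * P' := by rw [hM1, h2]
        rw [key]
        first
        | exact hP'pos
        | (calc 3 * ((P'ᵀ * !![c', b'; b', a] * P') 0 0) ^ 2 ≤ 4 * (c' * a - b' ^ 2) := hP'bd
            _ = 4 * (a * c - b ^ 2) := by rw [show c' * a - b' ^ 2 = a * c' - b' ^ 2 by ring, hinv])
      }

/-- Gauss's reduction theorem: every positive definite integral binary quadratic form
`a x² + 2 b x y + c y²` of determinant `D = a c - b² > 0` is arithmetically equivalent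
(via some `P ∈ GL₂(ℤ)`) to a form whose first coefficient `A` satisfies
`0 < A ≤ 2 √(D/3)`. -/
theorem gauss_reduction_binary_quadratic_form
    (a b c : ℤ)
    (hpd : ((!![a, b; b, c]).map (fun x => (x : ℝ))).PosDef)
    (hD : 0 < a * c - b ^ 2) :
    ∃ P : Matrix (Fin 2) (Fin 2) ℤ, IsUnit P.det ∧
      0 < (Pᵀ * !![a, b; b, c] * P) 0 0 ∧
      (((Pᵀ * !![a, b; b, c] * P) 0 0 : ℤ) : ℝ) ≤
        2 * Real.sqrt (((a * c - b ^ 2 : ℤ) : ℝ) / 3) := by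
  have ha : 0 < (a : ℝ) := by
    have h := hpd.dotProduct_mulVec_pos (x := ![1, 0]) (by intro h; simpa using congr_fun h 0)
    simpa [Matrix.mulVec, dotProduct, Fin.sum_univ_two, Matrix.map_apply] using h
  have ha' : 0 < a := by exact_mod_cast ha
  obtain ⟨P, hdet, hpos, hbd⟩ := gauss_aux a.toNat a b c le_rfl ha' hD
  refine ⟨P, hdet, hpos, ?_⟩
  set A : ℤ := (Pᵀ * !![a, b; b, c] * P) 0 0
  have h4 : (2:ℝ) * Real.sqrt (((a * c - b ^ 2 : ℤ) : ℝ) / 3) =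
      Real.sqrt (4 * (((a * c - b ^ 2 : ℤ) : ℝ) / 3)) := by
    rw [show (4:ℝ) * (((a * c - b ^ 2 : ℤ) : ℝ) / 3) = 2^2 * (((a * c - b ^ 2 : ℤ) : ℝ) / 3) by ring,
      Real.sqrt_mul (by positivity), Real.sqrt_sq (by norm_num)]
  rw [h4, ← Real.sqrt_sq (le_of_lt (by exact_mod_cast hpos : (0:ℝ) < (A:ℝ)))]
  apply Real.sqrt_le_sqrt
  have : (3:ℝ) * (A:ℝ)^2 ≤ 4 * ((a * c - b ^ 2 : ℤ) : ℝ) := by exact_mod_cast hbd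
  linarith
end

section
/- Let A be a nonzero integer not divisible by 4. Then there exist integers α and β such that α² + β² ≡ −1 (mod A), i.e. A divides α² + β² + 1. -/
private lemma hermite_combine {a b : ℤ} (hab : IsCoprime a b)
    (h1 : ∃ α β : ℤ, a ∣ α ^ 2 + β ^ 2 + 1) (h2 : ∃ α β : ℤ, b ∣ α ^ 2 + β ^ 2 + 1) :
    ∃ α β : ℤ, a * b ∣ α ^ 2 + β ^ 2 + 1 := by
  obtain ⟨α₁, β₁, h1⟩ := h1
  obtain ⟨α₂, β₂, h2⟩ := h2
  have hab' := hab
  obtain ⟨u, v, huv⟩ := hab'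
  refine ⟨α₁ + (α₂ - α₁) * u * a, β₁ + (β₂ - β₁) * u * a, hab.mul_dvd ?_ ?_⟩
  · -- mod a: congruent to (α₁, β₁)
    have key : (α₁ + (α₂ - α₁) * u * a) ^ 2 + (β₁ + (β₂ - β₁) * u * a) ^ 2 + 1
        - (α₁ ^ 2 + β₁ ^ 2 + 1)
        = a * ((α₂ - α₁) * u * (2 * α₁ + (α₂ - α₁) * u * a)
            + (β₂ - β₁) * u * (2 * β₁ + (β₂ - β₁) * u * a)) := by ring
    have heq : (α₁ + (α₂ - α₁) * u * a) ^ 2 + (β₁ + (β₂ - β₁) * u * a) ^ 2 + 1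
        = ((α₁ + (α₂ - α₁) * u * a) ^ 2 + (β₁ + (β₂ - β₁) * u * a) ^ 2 + 1
            - (α₁ ^ 2 + β₁ ^ 2 + 1)) + (α₁ ^ 2 + β₁ ^ 2 + 1) := by ring
    rw [heq]
    exact dvd_add ⟨_, key⟩ h1
  · -- mod b: note x + (y - x) * u * a = y - (y - x) * v * b  since u*a+v*b=1
    have e1 : α₁ + (α₂ - α₁) * u * a = α₂ - (α₂ - α₁) * v * b := by
      have : (α₂ - α₁) * (u * a + v * b) = (α₂ - α₁) * 1 := by rw [huv]
      nlinarith [this]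
    have e2 : β₁ + (β₂ - β₁) * u * a = β₂ - (β₂ - β₁) * v * b := by
      have : (β₂ - β₁) * (u * a + v * b) = (β₂ - β₁) * 1 := by rw [huv]
      nlinarith [this]
    rw [e1, e2]
    have key : (α₂ - (α₂ - α₁) * v * b) ^ 2 + (β₂ - (β₂ - β₁) * v * b) ^ 2 + 1
        - (α₂ ^ 2 + β₂ ^ 2 + 1)
        = b * ((α₂ - α₁) * v * ((α₂ - α₁) * v * b - 2 * α₂)
            + (β₂ - β₁) * v * ((β₂ - β₁) * v * b - 2 * β₂)) := by ring
    have heq : (α₂ - (α₂ - α₁) * v * b) ^ 2 + (β₂ - (β₂ - β₁) * v * b) ^ 2 + 1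
        = ((α₂ - (α₂ - α₁) * v * b) ^ 2 + (β₂ - (β₂ - β₁) * v * b) ^ 2 + 1
            - (α₂ ^ 2 + β₂ ^ 2 + 1)) + (α₂ ^ 2 + β₂ ^ 2 + 1) := by ring
    rw [heq]
    exact dvd_add ⟨_, key⟩ h2

/-- Hensel lifting step: pass from a solution mod `p ^ k` to one mod `p ^ (k+1)`,
for an odd prime `p` and `k ≥ 1`. -/
private lemma hermite_lift (p : ℕ) (hp : p.Prime) (hodd : p ≠ 2) (k : ℕ) (hk : 1 ≤ k)
    {α β : ℤ} (h : (p : ℤ) ^ k ∣ α ^ 2 + β ^ 2 + 1) :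
    ∃ α' β' : ℤ, (p : ℤ) ^ (k + 1) ∣ α' ^ 2 + β' ^ 2 + 1 := by
  haveI : Fact p.Prime := ⟨hp⟩
  obtain ⟨c, hc⟩ := h
  have hppos : (0:ℤ) < p := by exact_mod_cast hp.pos
  have hpk : (p : ℤ) ∣ α ^ 2 + β ^ 2 + 1 :=
    dvd_trans (dvd_pow_self _ (by omega : k ≠ 0)) ⟨c, hc⟩
  have hp2le : 2 ≤ p := hp.two_le
  -- not both α and β divisible by p
  have hnot : ¬ ((p:ℤ) ∣ α ∧ (p:ℤ) ∣ β) := by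
    rintro ⟨ha, hb⟩
    have hsum : (p:ℤ) ∣ α ^ 2 + β ^ 2 := dvd_add (dvd_pow ha two_ne_zero) (dvd_pow hb two_ne_zero)
    have h1 : (p:ℤ) ∣ 1 := (dvd_add_right hsum).mp hpk
    have := Int.le_of_dvd one_pos h1
    omega
  -- a helper doing the actual shift in the variable `x` (with the other one `y` fixed)
  have main : ∀ x y : ℤ, ¬ (p:ℤ) ∣ x → x ^ 2 + y ^ 2 + 1 = (p:ℤ) ^ k * c →
      ∃ α' β' : ℤ, (p : ℤ) ^ (k + 1) ∣ α' ^ 2 + β' ^ 2 + 1 := by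
    intro x y hx hxy
    have h2x : (2 * (x : ZMod p) : ZMod p) ≠ 0 := by
      have : ¬ ((p:ℤ) ∣ 2 * x) := by
        intro hd
        rcases (Int.Prime.dvd_mul' hp hd) with h2 | hxx
        · have := Int.le_of_dvd two_pos h2
          have : p = 2 := by omega
          exact hodd this
        · exact hx hxx
      rw [← ZMod.intCast_zmod_eq_zero_iff_dvd] at this
      push_cast at this
      exact this
    -- choose t with 2*x*t + c ≡ 0 mod p
    set u : ZMod p := (-(c : ZMod p)) * (2 * (x : ZMod p))⁻¹ with hu
    obtain ⟨t, ht⟩ : ∃ t : ℤ, (t : ZMod p) = u := ⟨(ZMod.cast u : ℤ), ZMod.intCast_zmod_cast u⟩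
    have hdvd : (p : ℤ) ∣ c + 2 * x * t := by
      rw [← ZMod.intCast_zmod_eq_zero_iff_dvd]
      push_cast
      rw [ht, hu]
      have hx0 : (x : ZMod p) ≠ 0 := right_ne_zero_of_mul h2x
      have h20 : (2 : ZMod p) ≠ 0 := left_ne_zero_of_mul h2x
      field_simp
      ring
    refine ⟨x + t * (p:ℤ) ^ k, y, ?_⟩
    obtain ⟨d, hd⟩ := hdvd
    have key : (x + t * (p:ℤ) ^ k) ^ 2 + y ^ 2 + 1
        = (p:ℤ) ^ (k + 1) * (d + t ^ 2 * (p:ℤ) ^ (k - 1)) := by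
      have hkk : k - 1 + 1 = k := by omega
      have e : (p:ℤ) ^ (k + 1) * (p:ℤ) ^ (k - 1) = (p:ℤ) ^ k * (p:ℤ) ^ k := by
        rw [← pow_add, ← pow_add]; congr 1; omega
      have : (x + t * (p:ℤ) ^ k) ^ 2 + y ^ 2 + 1
          = (p:ℤ) ^ k * (c + 2 * x * t) + t ^ 2 * ((p:ℤ) ^ k * (p:ℤ) ^ k) := by
        linear_combination hxy
      rw [this, hd, ← e]
      ring
    exact ⟨_, key⟩
  by_cases hα : (p:ℤ) ∣ α
  · have hβ : ¬ (p:ℤ) ∣ β := fun hb => hnot ⟨hα, hb⟩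
    exact main β α hβ (by linarith [hc])
  · exact main α β hα hc

private lemma hermite_prime_pow (p : ℕ) (hp : p.Prime) (hodd : p ≠ 2) (k : ℕ) :
    ∃ α β : ℤ, ((p : ℤ) ^ k) ∣ α ^ 2 + β ^ 2 + 1 := by
  induction k with
  | zero => exact ⟨0, 0, by simp⟩
  | succ n ih =>
    rcases Nat.eq_zero_or_pos n with rfl | hn
    · -- base case: mod p, use surjectivity of sums of two squares in ZMod p
      haveI : Fact p.Prime := ⟨hp⟩
      obtain ⟨a, b, hab⟩ := ZMod.sq_add_sq p (-1)
      refine ⟨(a.val : ℤ), (b.val : ℤ), ?_⟩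
      rw [pow_one, ← ZMod.intCast_zmod_eq_zero_iff_dvd]
      push_cast
      simp only [ZMod.natCast_val, ZMod.intCast_cast, ZMod.cast_id', id_eq]
      rw [hab]; ring
    · obtain ⟨α, β, h⟩ := ih
      exact hermite_lift p hp hodd n hn h

private lemma hermite_odd (n : ℕ) (hodd : Odd n) :
    ∃ α β : ℤ, (n : ℤ) ∣ α ^ 2 + β ^ 2 + 1 := by
  induction n using Nat.recOnPosPrimePosCoprime with
  | prime_pow p k hpp hk =>
    have hp2 : p ≠ 2 := by
      rintro rfl
      exact (Nat.not_odd_iff_even.mpr (Nat.even_pow.mpr ⟨even_two, hk.ne'⟩)) hodd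
    obtain ⟨α, β, h⟩ := hermite_prime_pow p hpp hp2 k
    exact ⟨α, β, by push_cast at h ⊢; exact h⟩
  | zero => exact absurd hodd (by decide)
  | one => exact ⟨0, 0, by simp⟩
  | coprime a b ha hb hab iha ihb =>
    rw [Nat.odd_mul] at hodd
    have h1 := iha hodd.1
    have h2 := ihb hodd.2
    have hcop : IsCoprime (a : ℤ) (b : ℤ) := hab.isCoprime
    obtain ⟨α, β, h⟩ := hermite_combine hcop h1 h2
    exact ⟨α, β, by push_cast at h ⊢; exact h⟩

/-- The preliminary step in Hermite's 1854 proof of the four-square theorem: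
for any nonzero integer `A` not divisible by `4`, the congruence
`α² + β² ≡ -1 (mod A)` is solvable in integers. -/
theorem exists_sum_two_squares_congruent_neg_one
    (A : ℤ) (hA : A ≠ 0) (h4 : ¬ (4 ∣ A)) :
    ∃ α β : ℤ, A ∣ α ^ 2 + β ^ 2 + 1 := by
  set n := A.natAbs with hn
  have hdvd : ∀ x : ℤ, (n : ℤ) ∣ x → A ∣ x := fun x h => (Int.natAbs_dvd).mp h
  have h4n : ¬ (4 ∣ n) := by
    intro h
    have : (4:ℤ) ∣ (n:ℤ) := by exact_mod_cast Nat.cast_dvd_cast (α := ℤ) h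
    exact h4 (Int.dvd_natAbs.mp this)
  rcases Nat.even_or_odd n with he | ho
  · -- n = 2 * m with m odd
    obtain ⟨m, hm⟩ := he
    have hmodd : Odd m := by
      rcases Nat.even_or_odd m with hme | hmo
      · obtain ⟨j, hj⟩ := hme
        exact absurd ⟨j, by omega⟩ h4n
      · exact hmo
    have h2 : ∃ α β : ℤ, (2 : ℤ) ∣ α ^ 2 + β ^ 2 + 1 := ⟨1, 0, by norm_num⟩
    have hcop : IsCoprime (2 : ℤ) (m : ℤ) := by
      have : Nat.Coprime 2 m := Nat.coprime_two_left.mpr hmodd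
      exact_mod_cast this.isCoprime
    obtain ⟨α, β, h⟩ := hermite_combine hcop h2 (hermite_odd m hmodd)
    refine ⟨α, β, hdvd _ ?_⟩
    have : (n : ℤ) = 2 * m := by exact_mod_cast congrArg (Nat.cast : ℕ → ℤ) (by omega : n = 2 * m)
    rw [this]; exact h
  · obtain ⟨α, β, h⟩ := hermite_odd n ho
    exact ⟨α, β, hdvd _ h⟩
end

section
/- Let p be a prime number with p ≡ 1 (mod 8). Then there exist integers x and y such that p = x² − 2y². -/
private lemma sq_eq_two_mul_sq_iff (x y : ℤ) (h : x ^ 2 = 2 * y ^ 2) : x = 0 ∧ y = 0 := by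
  rcases eq_or_ne y 0 with hy | hy
  · subst hy; constructor
    · exact pow_eq_zero_iff (n := 2) (by norm_num) |>.mp (by linarith)
    · rfl
  · exfalso
    have hyR : ((y : ℝ)) ≠ 0 := Int.cast_ne_zero.mpr hy
    have h2 : ((x : ℝ) / y) ^ 2 = 2 := by
      field_simp
      exact_mod_cast h.trans (mul_comm _ _)
    have : Real.sqrt 2 = |(x : ℝ) / y| := by
      rw [← h2, Real.sqrt_sq_eq_abs]
    exact irrational_sqrt_two ⟨|(x : ℚ) / y|, by push_cast [this]; norm_num⟩

set_option maxHeartbeats 1000000 in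
/-- Jacobi's 1839 result: every prime `p ≡ 1 (mod 8)` is represented by the
indefinite quadratic form `x² - 2 y²`. -/
theorem prime_one_mod_eight_eq_sq_sub_two_sq
    (p : ℕ) (hp : p.Prime) (hmod : p % 8 = 1) :
    ∃ x y : ℤ, (p : ℤ) = x ^ 2 - 2 * y ^ 2 := by
  classical
  haveI : Fact p.Prime := ⟨hp⟩
  have hp2 : p ≠ 2 := by rintro rfl; simp at hmod
  have hp3 : 3 ≤ p := by
    rcases hp.two_le.lt_or_eq with h | h
    · omega
    · omega
  -- 2 is a square mod p
  obtain ⟨a, ha⟩ : IsSquare (2 : ZMod p) := (ZMod.exists_sq_eq_two_iff hp2).mpr (Or.inl hmod)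
  set b : ℤ := a.valMinAbs with hb_def
  have hbcast : ((b : ℤ) : ZMod p) = a := ZMod.coe_valMinAbs a
  have hbz : ((b ^ 2 - 2 : ℤ) : ZMod p) = 0 := by
    push_cast [hbcast]
    rw [ha]; ring
  obtain ⟨c, hc⟩ : (p : ℤ) ∣ b ^ 2 - 2 := (ZMod.intCast_zmod_eq_zero_iff_dvd _ p).mp hbz
  -- bounds on b
  have hble : b.natAbs ≤ p / 2 := ZMod.natAbs_valMinAbs_le a
  have hb2 : b ^ 2 < (p : ℤ) ^ 2 := by
    have h1 : (b.natAbs : ℤ) ≤ (p / 2 : ℕ) := by exact_mod_cast hble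
    have h2 : ((p / 2 : ℕ) : ℤ) < p := by
      have := Nat.div_lt_self (by omega : 0 < p) (by norm_num : 1 < 2)
      exact_mod_cast this
    have habs : b ^ 2 = (b.natAbs : ℤ) ^ 2 := by rw [← Int.abs_eq_natAbs, sq_abs]
    nlinarith
  have hbge : 2 ≤ b.natAbs := by
    by_contra h
    push_neg at h
    have : b ^ 2 ≤ 1 := by
      have : b.natAbs ≤ 1 := by omega
      have h1 : (b.natAbs : ℤ) ≤ 1 := by exact_mod_cast this
      nlinarith [Int.natAbs_sq b, sq_abs b, Int.abs_eq_natAbs b]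
    have hpb : (p : ℤ) ∣ b ^ 2 - 2 := ⟨c, hc⟩
    have hb1 : b ^ 2 ≤ 1 := this
    have hne : 0 < -(b ^ 2 - 2) := by nlinarith
    have hle := Int.le_of_dvd hne (dvd_neg.mpr hpb)
    have h3 : (3 : ℤ) ≤ p := by exact_mod_cast hp3
    nlinarith [sq_nonneg b]
  have hb4 : 4 ≤ b ^ 2 := by
    have h1 : (2 : ℤ) ≤ (b.natAbs : ℤ) := by exact_mod_cast hbge
    nlinarith [Int.natAbs_sq b, sq_abs b]
  have hc1 : 1 ≤ c := by nlinarith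
  have hcp : c < p := by nlinarith
  -- descent predicate
  set P : ℕ → Prop := fun k => 0 < k ∧ ∃ x y : ℤ, x ^ 2 - 2 * y ^ 2 = (k : ℤ) * p with hP_def
  have hex : ∃ k, P k := by
    refine ⟨c.toNat, by omega, b, 1, ?_⟩
    rw [Int.toNat_of_nonneg (by omega)]
    linarith
  have hspec : P (Nat.find hex) := Nat.find_spec hex
  have hmin : ∀ n, n < Nat.find hex → ¬ P n := fun n h => Nat.find_min hex h
  have hfle : Nat.find hex ≤ c.toNat := Nat.find_min' hex ⟨by omega, b, 1, by
    rw [Int.toNat_of_nonneg (by omega)]; linarith⟩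
  set k := Nat.find hex with hk_def
  clear_value k
  obtain ⟨hk0, x, y, hxy⟩ := hspec
  have hkle : k ≤ c.toNat := hfle
  have hkp : k < p := by omega
  have hk1 : k = 1 := by
    by_contra hne1
    have hk2 : 2 ≤ k := by omega
    haveI : NeZero k := ⟨by omega⟩
    set x' : ℤ := (x : ZMod k).valMinAbs with hx'_def
    set y' : ℤ := (y : ZMod k).valMinAbs with hy'_def
    have hx'c : ((x' : ℤ) : ZMod k) = (x : ZMod k) := ZMod.coe_valMinAbs _
    have hy'c : ((y' : ℤ) : ZMod k) = (y : ZMod k) := ZMod.coe_valMinAbs _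
    -- bounds: 4 * x'^2 ≤ k^2, 4 * y'^2 ≤ k^2
    have hbound : ∀ z : ℤ, z.natAbs ≤ k / 2 → 4 * z ^ 2 ≤ (k : ℤ) ^ 2 := by
      intro z hz
      have hzz : z ^ 2 = (z.natAbs : ℤ) ^ 2 := by rw [← Int.abs_eq_natAbs, sq_abs]
      have h1 : (2 * z.natAbs : ℤ) ≤ (k : ℤ) := by exact_mod_cast (by omega : 2 * z.natAbs ≤ k)
      have h0 : (0:ℤ) ≤ (z.natAbs : ℤ) := Int.natCast_nonneg _
      nlinarith
    have hx'b := hbound x' (ZMod.natAbs_valMinAbs_le _)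
    have hy'b := hbound y' (ZMod.natAbs_valMinAbs_le _)
    clear_value x' y'
    obtain ⟨m, hm⟩ : (k : ℤ) ∣ x' ^ 2 - 2 * y' ^ 2 := by
      apply (ZMod.intCast_zmod_eq_zero_iff_dvd _ k).mp
      have h0 : ((x ^ 2 - 2 * y ^ 2 : ℤ) : ZMod k) = 0 := by
        rw [hxy]; push_cast; simp
      push_cast [hx'c, hy'c] at h0 ⊢
      linear_combination h0
    -- |m| < k
    have hmlt : m.natAbs < k := by
      have habs : |x' ^ 2 - 2 * y' ^ 2| ≤ x' ^ 2 + 2 * y' ^ 2 := by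
        rw [abs_le]; constructor <;> nlinarith [sq_nonneg x', sq_nonneg y']
      have h2 : (k : ℤ) * |m| ≤ x' ^ 2 + 2 * y' ^ 2 := by
        calc (k : ℤ) * |m| = |(k : ℤ) * m| := by rw [abs_mul, abs_of_nonneg (by positivity : (0:ℤ) ≤ (k:ℤ))]
        _ = |x' ^ 2 - 2 * y' ^ 2| := by rw [hm]
        _ ≤ _ := habs
      have hk2' : (2 : ℤ) ≤ (k : ℤ) := by exact_mod_cast hk2
      have h4 : |m| < (k : ℤ) := by nlinarith [abs_nonneg m, hx'b, hy'b]
      have : (m.natAbs : ℤ) < (k : ℤ) := by rwa [Int.abs_eq_natAbs] at h4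
      exact_mod_cast this
    have hm0 : m ≠ 0 := by
      rintro rfl
      rw [mul_zero, sub_eq_zero] at hm
      obtain ⟨hx'0, hy'0⟩ := sq_eq_two_mul_sq_iff x' y' hm
      have hkx : (k : ℤ) ∣ x := by
        have : ((x : ℤ) : ZMod k) = 0 := by rw [← hx'c, hx'0]; simp
        exact (ZMod.intCast_zmod_eq_zero_iff_dvd _ k).mp this
      have hky : (k : ℤ) ∣ y := by
        have : ((y : ℤ) : ZMod k) = 0 := by rw [← hy'c, hy'0]; simp
        exact (ZMod.intCast_zmod_eq_zero_iff_dvd _ k).mp this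
      obtain ⟨u, hu⟩ := hkx
      obtain ⟨v, hv⟩ := hky
      have : (k : ℤ) * ((k:ℤ) * (u^2 - 2*v^2)) = (k : ℤ) * p := by
        rw [← hxy, hu, hv]; ring
      have hkne : (k : ℤ) ≠ 0 := Int.natCast_ne_zero.mpr (by omega)
      have h5 : (k:ℤ) * (u^2 - 2*v^2) = p := by
        exact mul_left_cancel₀ hkne this
      have : (k : ℤ) ∣ (p : ℤ) := ⟨_, h5.symm⟩
      have hkdp : k ∣ p := by exact_mod_cast this
      rcases (Nat.Prime.eq_one_or_self_of_dvd hp k hkdp) with h | h <;> omega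
    -- descent step
    obtain ⟨X, hX⟩ : (k : ℤ) ∣ x * x' - 2 * y * y' := by
      apply (ZMod.intCast_zmod_eq_zero_iff_dvd _ k).mp
      have h0 : ((x ^ 2 - 2 * y ^ 2 : ℤ) : ZMod k) = 0 := by
        rw [hxy]; push_cast; simp
      push_cast [hx'c, hy'c] at h0 ⊢
      linear_combination h0
    obtain ⟨Y, hY⟩ : (k : ℤ) ∣ x * y' - x' * y := by
      apply (ZMod.intCast_zmod_eq_zero_iff_dvd _ k).mp
      push_cast [hx'c, hy'c]
      ring
    have hkey : X ^ 2 - 2 * Y ^ 2 = (p : ℤ) * m := by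
      have hid : (x ^ 2 - 2 * y ^ 2) * (x' ^ 2 - 2 * y' ^ 2)
          = (x * x' - 2 * y * y') ^ 2 - 2 * (x * y' - x' * y) ^ 2 := by ring
      rw [hxy, hm, hX, hY] at hid
      have hkne : ((k : ℤ)) ^ 2 ≠ 0 :=
        pow_ne_zero 2 (Int.natCast_ne_zero.mpr (by omega))
      apply mul_left_cancel₀ hkne
      linear_combination -hid
    have hcontra : P m.natAbs := by
      refine ⟨by omega, ?_⟩
      rcases lt_or_gt_of_ne hm0 with hneg | hpos
      · refine ⟨X + 2 * Y, X + Y, ?_⟩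
        have : (m.natAbs : ℤ) = -m := by
          rw [Int.ofNat_natAbs_of_nonpos (by omega)]
        rw [this]
        linear_combination -hkey
      · refine ⟨X, Y, ?_⟩
        have : (m.natAbs : ℤ) = m := Int.natAbs_of_nonneg (by omega)
        rw [this]
        linarith [hkey]
    exact hmin _ hmlt hcontra
  refine ⟨x, y, ?_⟩
  rw [hk1] at hxy
  push_cast at hxy
  linarith
end

section
/- Let f : ℂ → ℂ be an entire (everywhere complex-differentiable) function that is not constant. Then f cannot have three periods ω₁, ω₂, ω₃ that are linearly independent over ℚ (viewing ℂ as a vector space over ℚ). -/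
open Submodule Module Filter Topology

/-- A discrete `ℤ`-submodule of a finite-dimensional real normed space has `ℤ`-rank at most
the real dimension of the ambient space. -/
lemma discrete_submodule_finrank_le {E : Type*} [NormedAddCommGroup E]
    [NormedSpace ℝ E] [FiniteDimensional ℝ E] (L : Submodule ℤ E) [DiscreteTopology L] :
    finrank ℤ L ≤ finrank ℝ E := by
  classical
  set F : Submodule ℝ E := span ℝ (L : Set E) with hF
  set L₀ : Submodule ℤ F := L.comap ((F.restrictScalars ℤ).subtype) with hL₀
  have h_img : Subtype.val '' (L₀ : Set F) = (L : Set E) := by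
    ext x
    constructor
    · rintro ⟨⟨y, hyF⟩, hy, rfl⟩
      exact hy
    · intro hx
      exact ⟨⟨x, subset_span hx⟩, hx, rfl⟩
  have hd₀ : DiscreteTopology L₀ :=
    DiscreteTopology.preimage_of_continuous_injective (L : Set E)
      continuous_subtype_val Subtype.val_injective
  have hZL : IsZLattice ℝ L₀ := ⟨by
    rw [← (Submodule.map_injective_of_injective (injective_subtype F)).eq_iff,
      Submodule.map_span, Submodule.map_top, range_subtype]
    exact congrArg (span ℝ) h_img⟩
  have hle : L ≤ F.restrictScalars ℤ := fun x hx => subset_span hx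
  have he : L₀ ≃ₗ[ℤ] L := Submodule.comapSubtypeEquivOfLe hle
  calc finrank ℤ L = finrank ℤ L₀ := (LinearEquiv.finrank_eq he).symm
    _ = finrank ℝ F := ZLattice.rank ℝ L₀
    _ ≤ finrank ℝ E := F.finrank_le

/-- There is no nonconstant entire function of one complex variable with three
periods that are linearly independent over `ℚ`. -/
theorem no_three_independent_periods
    (f : ℂ → ℂ) (hf : Differentiable ℂ f) (hnc : ¬ ∃ c : ℂ, ∀ z, f z = c) :
    ¬ ∃ ω₁ ω₂ ω₃ : ℂ,
        (∀ z, f (z + ω₁) = f z) ∧ (∀ z, f (z + ω₂) = f z) ∧ (∀ z, f (z + ω₃) = f z) ∧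
        LinearIndependent ℚ ![ω₁, ω₂, ω₃] := by
  rintro ⟨ω₁, ω₂, ω₃, h₁, h₂, h₃, hind⟩
  set L : Submodule ℤ ℂ := span ℤ (Set.range ![ω₁, ω₂, ω₃]) with hL
  -- every element of `L` is a period of `f`
  have hper : ∀ ω ∈ L, ∀ z, f (z + ω) = f z := by
    intro ω hω
    induction hω using Submodule.span_induction with
    | mem x hx =>
      obtain ⟨i, rfl⟩ := hx
      fin_cases i
      · exact h₁
      · exact h₂
      · exact h₃
    | zero => simp
    | add a b _ _ ha hb => intro z; rw [← add_assoc, hb, ha]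
    | smul n a _ ha =>
      intro z
      induction n using Int.induction_on generalizing z with
      | zero => simp
      | succ k ih =>
        have : ((k : ℤ) + 1) • a = (k : ℤ) • a + a := by rw [add_smul, one_smul]
        rw [this, ← add_assoc, ha, ih]
      | pred k ih =>
        have : (-(k : ℤ) - 1) • a = -(k : ℤ) • a + (-a) := by
          rw [sub_smul, one_smul, sub_eq_add_neg]
        rw [this, ← add_assoc]
        have h' := ha (z + -(k : ℤ) • a + -a)
        rw [add_assoc, neg_add_cancel, add_zero] at h'
        rw [← h']
        exact ih z
  by_cases hd : DiscreteTopology L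
  · -- discrete case: rank bound gives a contradiction with `ℚ`-independence
    have hindZ : LinearIndependent ℤ ![ω₁, ω₂, ω₃] :=
      hind.restrict_scalars (by
        intro a b hab
        simpa using hab)
    have hmem : ∀ i, (![ω₁, ω₂, ω₃] i) ∈ L := fun i => subset_span ⟨i, rfl⟩
    set v : Fin 3 → L := fun i => ⟨![ω₁, ω₂, ω₃] i, hmem i⟩ with hv
    have hvi : LinearIndependent ℤ v := by
      apply LinearIndependent.of_comp L.subtype
      have : L.subtype ∘ v = ![ω₁, ω₂, ω₃] := by funext i; rfl
      rw [this]; exact hindZ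
    have h3 : 3 ≤ finrank ℤ L := by
      simpa using hvi.fintype_card_le_finrank
    have h2 : finrank ℤ L ≤ 2 := by
      have := discrete_submodule_finrank_le L
      rwa [Complex.finrank_real_complex] at this
    omega
  · -- non-discrete case: identity theorem gives that `f` is constant
    rw [discreteTopology_iff_nhds_ne] at hd
    push_neg at hd
    obtain ⟨x, hx⟩ := hd
    have hne : (𝓝[≠] x).NeBot := hx
    have hne' : (𝓝[≠] (x : ℂ) ⊓ 𝓟 (L : Set ℂ)).NeBot :=
      nhds_ne_subtype_neBot_iff.mp hne
    have hfr : ∃ᶠ z in 𝓝[≠] (x : ℂ), z ∈ (L : Set ℂ) :=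
      frequently_mem_iff_neBot.mpr hne'
    have hfr' : ∃ᶠ z in 𝓝[≠] (x : ℂ), f z = f 0 := by
      refine hfr.mono fun z hz => ?_
      have := hper z hz 0
      rwa [zero_add] at this
    have hfa : AnalyticOnNhd ℂ f Set.univ :=
      (hf.differentiableOn).analyticOnNhd isOpen_univ
    have hga : AnalyticOnNhd ℂ (fun _ : ℂ => f 0) Set.univ := fun _ _ => analyticAt_const
    have := hfa.eq_of_frequently_eq hga hfr'
    exact hnc ⟨f 0, fun z => congrFun this z⟩
end

section
/- Let G be a finite subgroup of GL_n(ℂ), the group of invertible n×n complex matrices. Then there exists an n×n complex matrix H that is Hermitian (Hᴴ = H) and positive definite, such that gᴴ H g = H for every g ∈ G; that is, the positive definite Hermitian form x ↦ x̄ᵀ H x is left absolutely invariant by every transformation of the group. -/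
open Matrix ComplexOrder

/-- The 1896 theorem of Loewy, Fuchs and Moore: every finite group of `n`-ary linear
homogeneous transformations leaves a positive definite Hermitian form absolutely
invariant: there is a Hermitian positive definite matrix `H` with `gᴴ H g = H`
for all `g` in the group. -/
theorem exists_invariant_posdef_hermitian_form
    (n : ℕ) (G : Subgroup (Matrix.GeneralLinearGroup (Fin n) ℂ)) (hG : Finite G) :
    ∃ H : Matrix (Fin n) (Fin n) ℂ, H.IsHermitian ∧ H.PosDef ∧
      ∀ g ∈ G, ((g : Matrix.GeneralLinearGroup (Fin n) ℂ) : Matrix (Fin n) (Fin n) ℂ)ᴴ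
          * H * ((g : Matrix.GeneralLinearGroup (Fin n) ℂ) : Matrix (Fin n) (Fin n) ℂ) = H := by
  classical
  haveI : Fintype G := Fintype.ofFinite G
  set coeM : G → Matrix (Fin n) (Fin n) ℂ :=
    fun a => ((a : Matrix.GeneralLinearGroup (Fin n) ℂ) : Matrix (Fin n) (Fin n) ℂ) with hcoe
  have herm : (∑ a : G, (coeM a)ᴴ * coeM a).IsHermitian := by
    unfold Matrix.IsHermitian
    rw [conjTranspose_sum]
    exact Finset.sum_congr rfl fun a _ => isHermitian_conjTranspose_mul_self (coeM a)
  refine ⟨∑ a : G, (coeM a)ᴴ * coeM a, herm, ?_, ?_⟩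
  · refine Matrix.PosDef.of_dotProduct_mulVec_pos herm fun x hx => ?_
    have hs : (∑ a : G, (coeM a)ᴴ * coeM a) *ᵥ x = ∑ a : G, ((coeM a)ᴴ * coeM a) *ᵥ x :=
      map_sum (Matrix.mulVec.addMonoidHomLeft x) _ _
    have hd := map_sum (AddMonoidHom.mk' (fun v => star x ⬝ᵥ v)
      (fun a b => dotProduct_add (star x) a b))
      (fun a : G => ((coeM a)ᴴ * coeM a) *ᵥ x) Finset.univ
    simp only [AddMonoidHom.mk'_apply] at hd
    rw [hs, hd]
    refine Finset.sum_pos' (fun a _ => (posSemidef_conjTranspose_mul_self (coeM a)).dotProduct_mulVec_nonneg x)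
      ⟨(1 : G), Finset.mem_univ _, ?_⟩
    have h1 : coeM (1 : G) = 1 := by simp [hcoe]
    rw [h1, Matrix.conjTranspose_one, Matrix.one_mul, Matrix.one_mulVec]
    simpa using dotProduct_star_self_pos_iff.mpr hx
  · intro g hg
    set gg : G := ⟨g, hg⟩ with hgg
    have key : ∀ a : G, (coeM gg)ᴴ * ((coeM a)ᴴ * coeM a) * coeM gg
        = (coeM (a * gg))ᴴ * coeM (a * gg) := by
      intro a
      simp only [hcoe, Subgroup.coe_mul, Units.val_mul, conjTranspose_mul]
      noncomm_ring
    have hgcoe : ((g : Matrix.GeneralLinearGroup (Fin n) ℂ) : Matrix (Fin n) (Fin n) ℂ)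
        = coeM gg := rfl
    rw [hgcoe, Finset.mul_sum, Finset.sum_mul]
    calc (∑ a : G, (coeM gg)ᴴ * ((coeM a)ᴴ * coeM a) * coeM gg)
        = ∑ a : G, (coeM (a * gg))ᴴ * coeM (a * gg) :=
          Finset.sum_congr rfl fun a _ => key a
      _ = ∑ a : G, (coeM a)ᴴ * coeM a :=
          Fintype.sum_equiv (Equiv.mulRight gg) _ _ (fun a => rfl)
end

section
/- Let H be an n×n complex matrix that is Hermitian (Hᴴ = H) and positive definite, and let M be an n×n complex matrix with Mᴴ H M = H. Then M is diagonalizable over ℂ (there exists an invertible P with P⁻¹ M P diagonal), and every eigenvalue λ of M (every root of its characteristic polynomial) has modulus |λ| = 1. -/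
open Matrix ComplexOrder

/-- If a matrix has a linearly independent family of `n` eigenvectors, it is diagonalizable. -/
lemma diag_of_eigenvectors {n : ℕ} (N : Matrix (Fin n) (Fin n) ℂ)
    (v : Fin n → (Fin n → ℂ)) (d : Fin n → ℂ)
    (hli : LinearIndependent ℂ v) (hev : ∀ j, N *ᵥ v j = d j • v j) :
    ∃ P : Matrix (Fin n) (Fin n) ℂ, IsUnit P.det ∧ P⁻¹ * N * P = Matrix.diagonal d := by
  rcases Nat.eq_zero_or_pos n with hn | hn
  · subst hn
    exact ⟨1, by simp, Subsingleton.elim _ _⟩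
  · haveI : Nonempty (Fin n) := ⟨⟨0, hn⟩⟩
    have card_eq : Fintype.card (Fin n) = Module.finrank ℂ (Fin n → ℂ) := by
      simp [Module.finrank_pi]
    let b : Module.Basis (Fin n) ℂ (Fin n → ℂ) := basisOfLinearIndependentOfCardEqFinrank hli card_eq
    have hb : ⇑b = v := coe_basisOfLinearIndependentOfCardEqFinrank hli card_eq
    let P : Matrix (Fin n) (Fin n) ℂ := (Pi.basisFun ℂ (Fin n)).toMatrix ⇑b
    haveI : Invertible P := (Pi.basisFun ℂ (Fin n)).invertibleToMatrix b
    have hPdet : IsUnit P.det := isUnit_det_of_invertible P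
    refine ⟨P, hPdet, ?_⟩
    have hP : ∀ i j, P i j = v j i := by
      intro i j
      simp [P, Module.Basis.toMatrix_apply, hb]
    have key : N * P = P * Matrix.diagonal d := by
      ext i j
      have h1 : (N * P) i j = (N *ᵥ v j) i := by
        simp [Matrix.mul_apply, Matrix.mulVec, dotProduct, hP]
      rw [h1, hev j, Matrix.mul_diagonal, hP]
      simp [mul_comm]
    calc P⁻¹ * N * P = P⁻¹ * (N * P) := by rw [Matrix.mul_assoc]
      _ = P⁻¹ * (P * Matrix.diagonal d) := by rw [key]
      _ = P⁻¹ * P * Matrix.diagonal d := by rw [Matrix.mul_assoc]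
      _ = Matrix.diagonal d := by rw [Matrix.nonsing_inv_mul P hPdet, Matrix.one_mul]

/-- A unitary matrix is diagonalizable. -/
lemma unitary_diagonalizable {n : ℕ} (U : Matrix (Fin n) (Fin n) ℂ) (hU : Uᴴ * U = 1) :
    ∃ P : Matrix (Fin n) (Fin n) ℂ, IsUnit P.det ∧
      ∃ d : Fin n → ℂ, P⁻¹ * U * P = Matrix.diagonal d := by
  have hU' : U * Uᴴ = 1 := mul_eq_one_comm.mp hU
  set T : EuclideanSpace ℂ (Fin n) →ₗ[ℂ] EuclideanSpace ℂ (Fin n) := Matrix.toEuclideanLin U with hT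
  set T' : EuclideanSpace ℂ (Fin n) →ₗ[ℂ] EuclideanSpace ℂ (Fin n) :=
    Matrix.toEuclideanLin Uᴴ with hT'
  -- multiplicativity of toEuclideanLin
  have hmul : ∀ X Y : Matrix (Fin n) (Fin n) ℂ,
      Matrix.toEuclideanLin (X * Y) = (Matrix.toEuclideanLin X).comp (Matrix.toEuclideanLin Y) := by
    intro X Y
    ext x
    simp [Matrix.toEuclideanLin_apply, Matrix.mulVec_mulVec]
  set A : EuclideanSpace ℂ (Fin n) →ₗ[ℂ] EuclideanSpace ℂ (Fin n) :=
    Matrix.toEuclideanLin (U + Uᴴ) with hA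
  set B : EuclideanSpace ℂ (Fin n) →ₗ[ℂ] EuclideanSpace ℂ (Fin n) :=
    Matrix.toEuclideanLin (Complex.I • (U - Uᴴ)) with hB
  have hAh : (U + Uᴴ).IsHermitian := by
    unfold Matrix.IsHermitian
    rw [Matrix.conjTranspose_add, Matrix.conjTranspose_conjTranspose, add_comm]
  have hBh : (Complex.I • (U - Uᴴ)).IsHermitian := by
    unfold Matrix.IsHermitian
    rw [Matrix.conjTranspose_smul, Matrix.conjTranspose_sub, Matrix.conjTranspose_conjTranspose]
    simp [Complex.conj_I, smul_sub, sub_eq_add_neg, add_comm]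
  have hAs : A.IsSymmetric := Matrix.isHermitian_iff_isSymmetric.mp hAh
  have hBs : B.IsSymmetric := Matrix.isHermitian_iff_isSymmetric.mp hBh
  have hcomm : Commute A B := by
    have hm : (U + Uᴴ) * (Complex.I • (U - Uᴴ)) = (Complex.I • (U - Uᴴ)) * (U + Uᴴ) := by
      have e1 : (U + Uᴴ) * (U - Uᴴ) = U * U - U * Uᴴ + Uᴴ * U - Uᴴ * Uᴴ := by noncomm_ring
      have e2 : (U - Uᴴ) * (U + Uᴴ) = U * U + U * Uᴴ - Uᴴ * U - Uᴴ * Uᴴ := by noncomm_ring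
      rw [Matrix.mul_smul, Matrix.smul_mul, e1, e2, hU, hU']
      congr 1
      abel
    have := congrArg Matrix.toEuclideanLin hm
    rw [hmul, hmul] at this
    exact this
  have htop := LinearMap.IsSymmetric.iSup_iSup_eigenspace_inf_eigenspace_eq_top_of_commute
    hAs hBs hcomm
  -- the eigenvectors of T span everything
  set E : Set (EuclideanSpace ℂ (Fin n)) := {w | ∃ c : ℂ, T w = c • w} with hE
  have hspan : Submodule.span ℂ E = ⊤ := by
    rw [← top_le_iff, ← htop]
    refine iSup_le fun ν => iSup_le fun μ => fun x hx => ?_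
    obtain ⟨hx1, hx2⟩ := hx
    rw [SetLike.mem_coe, Module.End.mem_eigenspace_iff] at hx1
    rw [SetLike.mem_coe, Module.End.mem_eigenspace_iff] at hx2
    have hAx : T x + T' x = ν • x := by
      have : A x = T x + T' x := by rw [hA, hT, hT', map_add]; rfl
      rw [← this, hx1]
    have hBx : Complex.I • (T x - T' x) = μ • x := by
      have : B x = Complex.I • (T x - T' x) := by
        rw [hB, hT, hT', _root_.map_smul, map_sub]; simp
      rw [← this, hx2]
    have h2 : T x - T' x = (-Complex.I * μ) • x := by
      have := congrArg (fun y => (-Complex.I) • y) hBx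
      simp only [smul_smul] at this
      rw [neg_mul, Complex.I_mul_I, neg_neg, one_smul] at this
      exact this
    have hTx : T x = ((ν + -Complex.I * μ) / 2) • x := by
      have hsum : (2 : ℂ) • T x = (ν + -Complex.I * μ) • x := by
        have : (2 : ℂ) • T x = (T x + T' x) + (T x - T' x) := by module
        rw [this, hAx, h2, ← add_smul]
      have h4 := congrArg (fun y => ((2 : ℂ)⁻¹) • y) hsum
      simp only [smul_smul] at h4
      rw [show ((2 : ℂ)⁻¹ * 2) = 1 by norm_num, one_smul] at h4
      rw [h4]
      congr 1
      ring
    exact Submodule.subset_span ⟨_, hTx⟩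
  obtain ⟨s, hsE, hsspan, hsli⟩ := exists_linearIndependent ℂ E
  have hstop : Submodule.span ℂ s = ⊤ := by rw [hsspan, hspan]
  let b : Module.Basis s ℂ (EuclideanSpace ℂ (Fin n)) :=
    Module.Basis.mk hsli (by rw [Subtype.range_coe, hstop])
  haveI : Fintype s := FiniteDimensional.fintypeBasisIndex b
  have hcard : Fintype.card s = n := by
    rw [← Module.finrank_eq_card_basis b, finrank_euclideanSpace_fin]
  let e : Fin n ≃ s := (Fintype.equivFinOfCardEq hcard).symm
  let b' : Module.Basis (Fin n) ℂ (EuclideanSpace ℂ (Fin n)) := b.reindex e.symm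
  have hb' : ∀ j, (b' j : EuclideanSpace ℂ (Fin n)) = (e j : EuclideanSpace ℂ (Fin n)) := by
    intro j
    simp [b', b, Module.Basis.reindex_apply, Module.Basis.mk_apply]
  have hmem : ∀ j : Fin n, ∃ c : ℂ, T (b' j) = c • (b' j) := by
    intro j
    rw [hb' j]
    exact hsE (e j).2
  choose d hd using hmem
  let v : Fin n → (Fin n → ℂ) := fun j => WithLp.equiv 2 (Fin n → ℂ) (b' j)
  have hli : LinearIndependent ℂ v := by
    have := b'.linearIndependent.map' (WithLp.linearEquiv 2 ℂ (Fin n → ℂ)).toLinearMap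
      (LinearMap.ker_eq_bot_of_injective (WithLp.linearEquiv 2 ℂ (Fin n → ℂ)).injective)
    exact this
  have hev : ∀ j, U *ᵥ v j = d j • v j := by
    intro j
    have := congrArg (WithLp.equiv 2 (Fin n → ℂ)) (hd j)
    exact this
  obtain ⟨P, h1, h2⟩ := diag_of_eigenvectors U v d hli hev
  exact ⟨P, h1, d, h2⟩

/-- Loewy's 1896 theorem: a positive definite Hermitian form can be transformed into
itself only by transformations that are diagonalizable (simple elementary divisors)
with all roots of their characteristic polynomial of modulus `1`. -/
theorem loewy_transformations_fixing_posdef_hermitian_form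
    (n : ℕ) (H M : Matrix (Fin n) (Fin n) ℂ)
    (hH : H.IsHermitian) (hpd : H.PosDef) (hM : Mᴴ * H * M = H) :
    (∃ P : Matrix (Fin n) (Fin n) ℂ, IsUnit P.det ∧
        ∃ d : Fin n → ℂ, P⁻¹ * M * P = Matrix.diagonal d) ∧
      ∀ μ : ℂ, M.charpoly.IsRoot μ → ‖μ‖ = 1 := by
  constructor
  · -- diagonalizability
    set S : Matrix (Fin n) (Fin n) ℂ := (open scoped MatrixOrder in CFC.sqrt H) with hSdef
    have hS2 : S * S = H :=
      open scoped MatrixOrder in CFC.sqrt_mul_sqrt_self H hpd.posSemidef.nonneg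
    have hSh : Sᴴ = S :=
      open scoped MatrixOrder in (CFC.sqrt_nonneg H).posSemidef.1
    have hSdet : IsUnit S.det := by
      have hHdet : IsUnit H.det := hpd.det_pos.ne'.isUnit
      rw [← hS2, Matrix.det_mul] at hHdet
      exact (IsUnit.mul_iff.mp hHdet).1
    have hSS : S * S⁻¹ = 1 := Matrix.mul_nonsing_inv S hSdet
    have hSS' : S⁻¹ * S = 1 := Matrix.nonsing_inv_mul S hSdet
    set U : Matrix (Fin n) (Fin n) ℂ := S * M * S⁻¹ with hUdef
    have hUu : Uᴴ * U = 1 := by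
      have hUH : Uᴴ = S⁻¹ * Mᴴ * S := by
        rw [hUdef, Matrix.conjTranspose_mul, Matrix.conjTranspose_mul,
          Matrix.conjTranspose_nonsing_inv, hSh, Matrix.mul_assoc]
      calc Uᴴ * U = S⁻¹ * (Mᴴ * (S * S) * M * S⁻¹) := by rw [hUH, hUdef]; noncomm_ring
        _ = S⁻¹ * (H * S⁻¹) := by rw [hS2, hM]
        _ = 1 := by
            rw [← hS2, Matrix.mul_assoc S S S⁻¹, hSS, Matrix.mul_one, hSS']
    obtain ⟨Q, hQdet, d, hQ⟩ := unitary_diagonalizable U hUu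
    refine ⟨S⁻¹ * Q, ?_, d, ?_⟩
    · rw [Matrix.det_mul]
      exact ((Matrix.isUnit_nonsing_inv_det S hSdet)).mul hQdet
    · have hinv : (S⁻¹ * Q)⁻¹ = Q⁻¹ * S := by
        rw [Matrix.mul_inv_rev, Matrix.nonsing_inv_nonsing_inv S hSdet]
      rw [hinv]
      calc Q⁻¹ * S * M * (S⁻¹ * Q)
          = Q⁻¹ * (S * M * S⁻¹) * Q := by simp only [Matrix.mul_assoc]
        _ = Q⁻¹ * U * Q := by rw [hUdef]
        _ = Matrix.diagonal d := hQ
  · -- eigenvalues have modulus one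
    intro μ hμ
    have hdet : (Matrix.scalar (Fin n) μ - M).det = 0 := by
      have heval : M.charpoly.eval μ = (Matrix.scalar (Fin n) μ - M).det := by
        rw [Matrix.charpoly, eval_det, Matrix.matPolyEquiv_charmatrix]
        simp
      rw [Polynomial.IsRoot] at hμ
      rw [← heval, hμ]
    obtain ⟨v, hv0, hv⟩ := (Matrix.exists_mulVec_eq_zero_iff).mpr hdet
    have hMv : M *ᵥ v = μ • v := by
      have h1 : (Matrix.scalar (Fin n) μ - M) *ᵥ v =
          Matrix.scalar (Fin n) μ *ᵥ v - M *ᵥ v := Matrix.sub_mulVec _ _ _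
      rw [hv] at h1
      have h2 : Matrix.scalar (Fin n) μ *ᵥ v = μ • v := by
        ext i
        simp [Matrix.scalar, Matrix.mulVec_diagonal]
      rw [h2] at h1
      have h3 : μ • v - M *ᵥ v = 0 := h1.symm
      exact (sub_eq_zero.mp h3).symm
    set c : ℂ := star v ⬝ᵥ (H *ᵥ v) with hc
    have hcpos : 0 < c := hpd.dotProduct_mulVec_pos hv0
    have e3 : (Mᴴ * H * M) *ᵥ v = Mᴴ *ᵥ (H *ᵥ (M *ᵥ v)) := by
      rw [Matrix.mulVec_mulVec, Matrix.mulVec_mulVec]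
    have e4 : star v ⬝ᵥ (Mᴴ *ᵥ (H *ᵥ (M *ᵥ v)))
        = star (M *ᵥ v) ⬝ᵥ (H *ᵥ (M *ᵥ v)) := by
      rw [Matrix.dotProduct_mulVec, ← Matrix.star_mulVec]
    have hkey : (starRingEnd ℂ) μ * (μ * c) = c := by
      have h5 : star (M *ᵥ v) ⬝ᵥ (H *ᵥ (M *ᵥ v)) = (starRingEnd ℂ) μ * (μ * c) := by
        rw [hMv, Matrix.mulVec_smul, star_smul, smul_dotProduct,
          dotProduct_smul]
        simp [hc, smul_eq_mul, mul_assoc, Complex.star_def]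
      rw [← h5, ← e4, ← e3, hM]
    have hne : c ≠ 0 := ne_of_gt hcpos
    have hmod : (starRingEnd ℂ) μ * μ = 1 := by
      have h6 : ((starRingEnd ℂ) μ * μ) * c = 1 * c := by
        rw [one_mul]; linear_combination hkey
      exact mul_right_cancel₀ hne h6
    have hnsq : Complex.normSq μ = 1 := by
      have : ((Complex.normSq μ : ℝ) : ℂ) = 1 := by
        rw [Complex.normSq_eq_conj_mul_self, hmod]
      exact_mod_cast this
    rw [Complex.norm_def, hnsq, Real.sqrt_one]
end

section
/- Let H be an n×n complex matrix that is Hermitian (Hᴴ = H) and positive definite. Then the set of n×n matrices M all of whose entries are Gaussian integers (complex numbers a + b i with a, b ∈ ℤ) and which satisfy Mᴴ H M = H is finite. -/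
open Matrix ComplexOrder
open scoped MatrixOrder

/-- Gaussian integers with bounded absolute value form a finite set. -/
lemma gauss_bounded_finite (C : ℝ) :
    {z : ℂ | (∃ a b : ℤ, z = (a : ℂ) + (b : ℂ) * Complex.I) ∧ ‖z‖ ≤ C}.Finite := by
  have hfin : (Set.Icc (-⌈C⌉) ⌈C⌉ ×ˢ Set.Icc (-⌈C⌉) ⌈C⌉ : Set (ℤ × ℤ)).Finite :=
    (Set.finite_Icc _ _).prod (Set.finite_Icc _ _)
  refine (hfin.image (fun p : ℤ × ℤ => (p.1 : ℂ) + (p.2 : ℂ) * Complex.I)).subset ?_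
  rintro z ⟨⟨a, b, rfl⟩, hle⟩
  have hre : ((a : ℂ) + (b : ℂ) * Complex.I).re = a := by simp
  have him : ((a : ℂ) + (b : ℂ) * Complex.I).im = b := by simp
  have h1 : |(a : ℝ)| ≤ C := by
    calc |(a : ℝ)| = |((a : ℂ) + (b : ℂ) * Complex.I).re| := by rw [hre]
    _ ≤ ‖_‖ := Complex.abs_re_le_norm _
    _ ≤ C := hle
  have h2 : |(b : ℝ)| ≤ C := by
    calc |(b : ℝ)| = |((a : ℂ) + (b : ℂ) * Complex.I).im| := by rw [him]
    _ ≤ ‖_‖ := Complex.abs_im_le_norm _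
    _ ≤ C := hle
  have hC : C ≤ (⌈C⌉ : ℝ) := Int.le_ceil C
  have ha : |a| ≤ ⌈C⌉ := by exact_mod_cast (h1.trans hC : |(a:ℝ)| ≤ (⌈C⌉:ℝ))
  have hb : |b| ≤ ⌈C⌉ := by exact_mod_cast (h2.trans hC : |(b:ℝ)| ≤ (⌈C⌉:ℝ))
  exact ⟨(a, b), ⟨Set.mem_Icc.mpr (abs_le.mp ha), Set.mem_Icc.mpr (abs_le.mp hb)⟩, rfl⟩

/-- Entries of a matrix with `Uᴴ U = 1` have absolute value at most 1. -/
lemma unitary_entry_bound (n : ℕ) (U : Matrix (Fin n) (Fin n) ℂ) (hU : Uᴴ * U = 1)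
    (k j : Fin n) : ‖U k j‖ ≤ 1 := by
  have h1 : (Uᴴ * U) j j = 1 := by rw [hU]; simp [Matrix.one_apply]
  rw [Matrix.mul_apply] at h1
  have h2 : ∑ i, ‖U i j‖ ^ 2 = 1 := by
    have := congrArg Complex.re h1
    rw [Complex.re_sum, Complex.one_re] at this
    rw [← this]
    apply Finset.sum_congr rfl
    intro i _
    simp [conjTranspose_apply, ← Complex.normSq_eq_norm_sq, Complex.normSq_apply,
      Complex.mul_re]
  have h3 : ‖U k j‖ ^ 2 ≤ 1 := by
    rw [← h2]
    exact Finset.single_le_sum (f := fun i => ‖U i j‖ ^ 2)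
      (fun i _ => sq_nonneg _) (Finset.mem_univ k)
  nlinarith [norm_nonneg (U k j)]

/-- Entrywise bound for a triple product with unitary middle factor. -/
lemma triple_product_entry_bound (n : ℕ) (A U B : Matrix (Fin n) (Fin n) ℂ)
    (hU : ∀ k l, ‖U k l‖ ≤ 1) (i j : Fin n) :
    ‖(A * U * B) i j‖ ≤
      (∑ k, ‖A i k‖) * (∑ l, ‖B l j‖) := by
  rw [Matrix.mul_apply]
  calc ‖∑ l, (A * U) i l * B l j‖
      ≤ ∑ l, ‖(A * U) i l * B l j‖ := norm_sum_le _ _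
    _ ≤ ∑ l, (∑ k, ‖A i k‖) * ‖B l j‖ := by
        apply Finset.sum_le_sum
        intro l _
        rw [norm_mul]
        apply mul_le_mul_of_nonneg_right _ (norm_nonneg _)
        rw [Matrix.mul_apply]
        calc ‖∑ k, A i k * U k l‖
            ≤ ∑ k, ‖A i k * U k l‖ := norm_sum_le _ _
          _ ≤ ∑ k, ‖A i k‖ := by
              apply Finset.sum_le_sum
              intro k _
              rw [norm_mul]
              calc ‖A i k‖ * ‖U k l‖
                  ≤ ‖A i k‖ * 1 :=
                    mul_le_mul_of_nonneg_left (hU k l) (norm_nonneg _)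
                _ = _ := mul_one _
    _ = (∑ k, ‖A i k‖) * (∑ l, ‖B l j‖) := by
        rw [Finset.mul_sum]

/-- Picard's observation: the group of linear transformations with Gaussian-integer
coefficients leaving a positive definite Hermitian form invariant is finite. -/
theorem finiteness_of_gaussian_integer_automorphs_of_posdef_hermitian_form
    (n : ℕ) (H : Matrix (Fin n) (Fin n) ℂ) (hH : H.IsHermitian) (hpd : H.PosDef) :
    {M : Matrix (Fin n) (Fin n) ℂ |
      (∀ i j, ∃ a b : ℤ, M i j = (a : ℂ) + (b : ℂ) * Complex.I) ∧
      Mᴴ * H * M = H}.Finite := by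
  classical
  set B := CFC.sqrt H with hBdef
  have hB2 : B * B = H := CFC.sqrt_mul_sqrt_self H hpd.posSemidef.nonneg
  have hBH : Bᴴ = B := (CFC.sqrt_nonneg H).posSemidef.1
  have hdetH : H.det ≠ 0 := hpd.det_pos.ne'
  have hdetB : IsUnit B.det := by
    rw [isUnit_iff_ne_zero]
    intro h
    apply hdetH
    rw [← hB2, det_mul, h, mul_zero]
  have hBi : B⁻¹ * B = 1 := nonsing_inv_mul B hdetB
  have hiB : B * B⁻¹ = 1 := mul_nonsing_inv B hdetB
  have hBiH : (B⁻¹)ᴴ = B⁻¹ := by rw [conjTranspose_nonsing_inv, hBH]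
  set C : ℝ := ∑ i, ∑ j, (∑ k, ‖B⁻¹ i k‖) * (∑ l, ‖B l j‖)
    with hCdef
  -- every automorph has entries bounded by C
  have hbound : ∀ M : Matrix (Fin n) (Fin n) ℂ, Mᴴ * H * M = H →
      ∀ i j, ‖M i j‖ ≤ C := by
    intro M hMH i j
    set U := B * M * B⁻¹ with hUdef
    have hUU : Uᴴ * U = 1 := by
      have hUH : Uᴴ = B⁻¹ * Mᴴ * B := by
        simp [hUdef, conjTranspose_mul, hBH, hBiH, Matrix.mul_assoc]
      rw [hUH, hUdef]
      calc B⁻¹ * Mᴴ * B * (B * M * B⁻¹)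
          = B⁻¹ * (Mᴴ * (B * B) * M) * B⁻¹ := by simp only [Matrix.mul_assoc]
        _ = B⁻¹ * (B * B) * B⁻¹ := by rw [hB2, hMH, ← hB2]
        _ = 1 := by rw [← Matrix.mul_assoc, hBi, Matrix.one_mul, hiB]
    have hMM : M = B⁻¹ * U * B := by
      calc M = 1 * M * 1 := by rw [Matrix.one_mul, Matrix.mul_one]
        _ = (B⁻¹ * B) * M * (B⁻¹ * B) := by rw [hBi]
        _ = B⁻¹ * (B * M * B⁻¹) * B := by simp only [Matrix.mul_assoc]
    calc ‖M i j‖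
        = ‖(B⁻¹ * U * B) i j‖ := by rw [← hMM]
      _ ≤ (∑ k, ‖B⁻¹ i k‖) * (∑ l, ‖B l j‖) :=
          triple_product_entry_bound n B⁻¹ U B (unitary_entry_bound n U hUU) i j
      _ ≤ C := by
          rw [hCdef]
          have h1 : ∀ i' : Fin n, (0:ℝ) ≤
              ∑ j', (∑ k, ‖B⁻¹ i' k‖) * (∑ l, ‖B l j'‖) := by
            intro i'
            apply Finset.sum_nonneg
            intro j' _
            exact mul_nonneg (Finset.sum_nonneg fun _ _ => norm_nonneg _)
              (Finset.sum_nonneg fun _ _ => norm_nonneg _)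
          calc (∑ k, ‖B⁻¹ i k‖) * (∑ l, ‖B l j‖)
              ≤ ∑ j', (∑ k, ‖B⁻¹ i k‖) * (∑ l, ‖B l j'‖) :=
                Finset.single_le_sum (f := fun j' =>
                  (∑ k, ‖B⁻¹ i k‖) * (∑ l, ‖B l j'‖))
                  (fun j' _ => mul_nonneg
                    (Finset.sum_nonneg fun _ _ => norm_nonneg _)
                    (Finset.sum_nonneg fun _ _ => norm_nonneg _))
                  (Finset.mem_univ j)
            _ ≤ ∑ i', ∑ j', (∑ k, ‖B⁻¹ i' k‖) * (∑ l, ‖B l j'‖) :=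
                Finset.single_le_sum (f := fun i' =>
                  ∑ j', (∑ k, ‖B⁻¹ i' k‖) * (∑ l, ‖B l j'‖))
                  (fun i' _ => h1 i') (Finset.mem_univ i)
  -- conclude by embedding into a finite product of finite sets
  have hTfin := gauss_bounded_finite C
  have hpi : (Set.pi (Set.univ : Set (Fin n)) fun _ =>
      Set.pi (Set.univ : Set (Fin n)) fun _ =>
        {z : ℂ | (∃ a b : ℤ, z = (a : ℂ) + (b : ℂ) * Complex.I) ∧
          ‖z‖ ≤ C}).Finite :=
    Set.Finite.pi fun _ => Set.Finite.pi fun _ => hTfin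
  refine hpi.subset ?_
  rintro M ⟨hgauss, hMH⟩
  intro i _
  intro j _
  exact ⟨hgauss i j, hbound M hMH i j⟩
end

section
/- There do not exist positive integers a, b, c, d such that a² + b² = c² and a·b = 2·d²; that is, the area of a right-angled triangle with integer sides is never a perfect square. -/
private lemma odd_isCoprime_two {k : ℤ} (h : Odd k) : IsCoprime k 2 := by
  obtain ⟨j, hj⟩ := h
  exact ⟨1, -j, by linarith⟩

set_option maxHeartbeats 1600000 in
/-- Key descent lemma: no solution with `c.natAbs = C`, by strong induction on `C`. -/
private lemma fermat_area_descent : ∀ C : ℕ, ∀ c : ℤ, c.natAbs = C →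
    ∀ a b d : ℤ, 0 < a → 0 < b → 0 < c → 0 < d →
      a ^ 2 + b ^ 2 = c ^ 2 → a * b = 2 * d ^ 2 → False := by
  intro C
  induction C using Nat.strong_induction_on with
  | _ C IH =>
  intro c hC a b d ha hb hc hd h1 h2
  -- reduce to a primitive triple
  have hgpos : 0 < Int.gcd a b := Int.gcd_pos_of_ne_zero_left _ (ne_of_gt ha)
  set G : ℤ := (Int.gcd a b : ℤ) with hG
  have hGpos : (0:ℤ) < G := by rw [hG]; exact_mod_cast hgpos
  have hGa : G ∣ a := Int.gcd_dvd_left a b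
  have hGb : G ∣ b := Int.gcd_dvd_right a b
  have hGc : G ∣ c := by
    have h' : G ^ 2 ∣ c ^ 2 := by
      rw [← h1]
      exact dvd_add (pow_dvd_pow_of_dvd hGa 2) (pow_dvd_pow_of_dvd hGb 2)
    exact (Int.pow_dvd_pow_iff two_ne_zero).mp h'
  have hx : a = G * (a / G) := (Int.mul_ediv_cancel' hGa).symm
  have hy : b = G * (b / G) := (Int.mul_ediv_cancel' hGb).symm
  have hzc : c = G * (c / G) := (Int.mul_ediv_cancel' hGc).symm
  set x : ℤ := a / G with hxd
  set y : ℤ := b / G with hyd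
  set z : ℤ := c / G with hzd
  have hposaux : ∀ w : ℤ, 0 < G * w → 0 < w := by
    intro w hw
    rcases mul_pos_iff.mp hw with ⟨_, h'⟩ | ⟨h', _⟩
    · exact h'
    · linarith
  have hxpos : 0 < x := hposaux x (by rw [← hx]; exact ha)
  have hypos : 0 < y := hposaux y (by rw [← hy]; exact hb)
  have hzpos : 0 < z := hposaux z (by rw [← hzc]; exact hc)
  have hcop : Int.gcd x y = 1 := Int.gcd_div_gcd_div_gcd hgpos
  have hzx : x ^ 2 + y ^ 2 = z ^ 2 := by
    have key : G ^ 2 * (x ^ 2 + y ^ 2) = G ^ 2 * z ^ 2 := by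
      rw [hx, hy, hzc] at h1; linear_combination h1
    exact mul_left_cancel₀ (by positivity) key
  have hPT : PythagoreanTriple x y z := by
    show x * x + y * y = z * z
    linear_combination hzx
  obtain ⟨m, n, hmn1, hmn2, hcoMN, hparMN⟩ :=
    PythagoreanTriple.coprime_classification.mp ⟨hPT, hcop⟩
  have hzmn : z = m ^ 2 + n ^ 2 := by
    rcases hmn2 with h | h
    · exact h
    · exfalso; rw [h] at hzpos; linarith [sq_nonneg m, sq_nonneg n]
  have hxyprod : x * y = 2 * (m * n * ((m - n) * (m + n))) := by
    rcases hmn1 with ⟨h1', h2'⟩ | ⟨h1', h2'⟩ <;> rw [h1', h2'] <;> ring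
  have hprodB : 0 < m * n ∧ 0 < (m - n) * (m + n) := by
    have hid : (m - n) * (m + n) = m ^ 2 - n ^ 2 := by ring
    rcases hmn1 with ⟨h1', h2'⟩ | ⟨h1', h2'⟩
    · rw [h1'] at hxpos; rw [h2'] at hypos
      constructor <;> linarith
    · rw [h1'] at hxpos; rw [h2'] at hypos
      constructor <;> linarith
  obtain ⟨hprod1, hprod2⟩ := hprodB
  have hpar : Even m ∧ Odd n ∨ Odd m ∧ Even n := by
    rcases hparMN with ⟨h1', h2'⟩ | ⟨h1', h2'⟩
    · exact Or.inl ⟨Int.even_iff.mpr h1', Int.odd_iff.mpr h2'⟩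
    · exact Or.inr ⟨Int.odd_iff.mpr h1', Int.even_iff.mpr h2'⟩
  have hcoI : IsCoprime m n := Int.isCoprime_iff_gcd_eq_one.mpr hcoMN
  -- WLOG both m and n positive
  have hwlog : ∃ M N : ℤ, 0 < M ∧ 0 < N ∧ IsCoprime M N ∧
      (Even M ∧ Odd N ∨ Odd M ∧ Even N) ∧ M * N = m * n ∧
      M ^ 2 - N ^ 2 = m ^ 2 - n ^ 2 ∧ M ^ 2 + N ^ 2 = m ^ 2 + n ^ 2 := by
    rcases lt_trichotomy m 0 with hm | hm | hm
    · have hn : n < 0 := by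
        rcases mul_pos_iff.mp hprod1 with ⟨h1'', h2''⟩ | ⟨h1'', h2''⟩
        · linarith
        · exact h2''
      refine ⟨-m, -n, by linarith, by linarith, hcoI.neg_left.neg_right, ?_, by ring,
        by ring, by ring⟩
      simpa [even_neg, odd_neg] using hpar
    · exfalso; rw [hm, zero_mul] at hprod1; exact lt_irrefl 0 hprod1
    · have hn : 0 < n := by
        rcases mul_pos_iff.mp hprod1 with ⟨h1'', h2''⟩ | ⟨h1'', h2''⟩
        · exact h2''
        · linarith
      exact ⟨m, n, hm, hn, hcoI, hpar, rfl, rfl, rfl⟩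
  obtain ⟨M, N, hM, hN, hco, hparP, hMN1, hMN2, hMN3⟩ := hwlog
  have hMgtN : N < M := by
    have h2sq : 0 < M ^ 2 - N ^ 2 := by
      have hid : (m - n) * (m + n) = m ^ 2 - n ^ 2 := by ring
      linarith
    by_contra hcon
    push_neg at hcon
    have := pow_le_pow_left₀ hM.le hcon 2
    linarith
  -- the area equation for the primitive triple
  rw [hx, hy] at h2
  have hxy2 : x * y = 2 * ((m * n) * (m ^ 2 - n ^ 2)) := by linear_combination hxyprod
  rw [← hMN1, ← hMN2] at hxy2
  have e2 : 2 * d ^ 2 = 2 * (G ^ 2 * (M * N * ((M - N) * (M + N)))) := by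
    linear_combination (-1 : ℤ) * h2 + G ^ 2 * hxy2
  have hd2 : d ^ 2 = G ^ 2 * (M * N * ((M - N) * (M + N))) :=
    mul_left_cancel₀ two_ne_zero e2
  have hGd : G ∣ d := (Int.pow_dvd_pow_iff two_ne_zero).mp ⟨_, hd2⟩
  have hde : d = G * (d / G) := (Int.mul_ediv_cancel' hGd).symm
  set e : ℤ := d / G with hed
  have he2 : e ^ 2 = M * N * ((M - N) * (M + N)) := by
    have key : G ^ 2 * e ^ 2 = G ^ 2 * (M * N * ((M - N) * (M + N))) := by
      rw [← mul_pow, ← hde]; exact hd2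
    exact mul_left_cancel₀ (by positivity) key
  -- coprimality of the four factors
  have cm_sub : IsCoprime M (M - N) := by
    have h' := (hco.neg_right).add_mul_left_right 1
    rwa [show -N + M * 1 = M - N by ring] at h'
  have cm_add : IsCoprime M (M + N) := by
    have h' := hco.add_mul_left_right 1
    rwa [show N + M * 1 = M + N by ring] at h'
  have cn_sub : IsCoprime N (M - N) := by
    have h' := hco.symm.add_mul_left_right (-1)
    rwa [show M + N * (-1) = M - N by ring] at h'
  have cn_add : IsCoprime N (M + N) := by
    have h' := hco.symm.add_mul_left_right 1
    rwa [show M + N * 1 = M + N by ring] at h'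
  have hodd_sub : Odd (M - N) := by
    rcases hparP with ⟨he', ho'⟩ | ⟨ho', he'⟩
    · exact he'.sub_odd ho'
    · exact ho'.sub_even he'
  have csub_add : IsCoprime (M - N) (M + N) := by
    obtain ⟨U, V, hUV⟩ := hco
    have h2' := (odd_isCoprime_two hodd_sub).add_mul_left_right (-(U - V))
    rw [show (2:ℤ) + (M - N) * (-(U - V)) = (U + V) * (M + N) by linear_combination (-2 : ℤ) * hUV]
      at h2'
    exact h2'.of_mul_right_right
  have hco' : IsCoprime M N := Int.isCoprime_iff_gcd_eq_one.mpr (by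
    exact Int.isCoprime_iff_gcd_eq_one.mp (by
      rcases hparP with _ | _ <;> exact (by assumption : IsCoprime M N)))
  -- each of the four factors is a square
  have hsq : ∀ w u : ℤ, 0 < w → (w = u ^ 2 ∨ w = -u ^ 2) → ∃ v : ℤ, 0 < v ∧ w = v ^ 2 := by
    intro w u hw hwu
    rcases hwu with h' | h'
    · have hu0 : u ≠ 0 := by rintro rfl; rw [h'] at hw; norm_num at hw
      exact ⟨|u|, abs_pos.mpr hu0, by rw [h', sq_abs]⟩
    · exfalso; linarith [sq_nonneg u]
  have hp' : ∃ v : ℤ, 0 < v ∧ M = v ^ 2 := by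
    obtain ⟨u, hu⟩ := Int.sq_of_isCoprime (hco'.mul_right (cm_sub.mul_right cm_add))
      (show M * (N * ((M - N) * (M + N))) = e ^ 2 by linear_combination (-1 : ℤ) * he2)
    exact hsq M u hM hu
  obtain ⟨p, hppos, hpM⟩ := hp'
  have hq' : ∃ v : ℤ, 0 < v ∧ N = v ^ 2 := by
    obtain ⟨u, hu⟩ := Int.sq_of_isCoprime (hco'.symm.mul_right (cn_sub.mul_right cn_add))
      (show N * (M * ((M - N) * (M + N))) = e ^ 2 by linear_combination (-1 : ℤ) * he2)
    exact hsq N u hN hu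
  obtain ⟨q, hqpos, hqN⟩ := hq'
  have hr' : ∃ v : ℤ, 0 < v ∧ M - N = v ^ 2 := by
    obtain ⟨u, hu⟩ := Int.sq_of_isCoprime
      ((cm_sub.symm.mul_right cn_sub.symm).mul_right csub_add)
      (show (M - N) * (M * N * (M + N)) = e ^ 2 by linear_combination (-1 : ℤ) * he2)
    exact hsq (M - N) u (by linarith) hu
  obtain ⟨r, hrpos, hrMN⟩ := hr'
  have hs' : ∃ v : ℤ, 0 < v ∧ M + N = v ^ 2 := by
    obtain ⟨u, hu⟩ := Int.sq_of_isCoprime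
      ((cm_add.symm.mul_right cn_add.symm).mul_right csub_add.symm)
      (show (M + N) * (M * N * (M - N)) = e ^ 2 by linear_combination (-1 : ℤ) * he2)
    exact hsq (M + N) u (by linarith) hu
  obtain ⟨s, hspos, hsMN⟩ := hs'
  -- construct the smaller solution
  have hsr : r < s := by
    have hlt : r ^ 2 < s ^ 2 := by rw [← hrMN, ← hsMN]; linarith
    by_contra hcon
    push_neg at hcon
    exact absurd (pow_le_pow_left₀ hspos.le hcon 2) (by linarith)
  have hsr_even : Even (s - r) := by
    rcases Int.even_or_odd s with hs'' | hs'' <;> rcases Int.even_or_odd r with hr'' | hr''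
    · exact hs''.sub hr''
    · exfalso
      have hodd : Odd (s ^ 2 - r ^ 2) := (Int.even_pow.mpr ⟨hs'', two_ne_zero⟩).sub_odd hr''.pow
      have heq : s ^ 2 - r ^ 2 = 2 * N := by linear_combination - hsMN + hrMN
      rw [heq] at hodd
      exact (Int.not_odd_iff_even.mpr (even_two_mul N)) hodd
    · exfalso
      have hodd : Odd (s ^ 2 - r ^ 2) := hs''.pow.sub_even (Int.even_pow.mpr ⟨hr'', two_ne_zero⟩)
      have heq : s ^ 2 - r ^ 2 = 2 * N := by linear_combination - hsMN + hrMN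
      rw [heq] at hodd
      exact (Int.not_odd_iff_even.mpr (even_two_mul N)) hodd
    · exact hs''.sub_odd hr''
  obtain ⟨v, hv⟩ := hsr_even
  have hveq : s = r + 2 * v := by omega
  have hvpos : 0 < v := by omega
  have hN2 : 2 * N = 2 * (2 * ((r + v) * v)) := by
    linear_combination hsMN - hrMN + (s + r + 2 * v) * hveq
  have hNval : N = 2 * ((r + v) * v) := mul_left_cancel₀ two_ne_zero hN2
  have hq2 : q ^ 2 = 2 * ((r + v) * v) := by rw [← hqN]; exact hNval
  have hqeven : Even (q ^ 2) := ⟨(r + v) * v, by rw [hq2]; ring⟩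
  obtain ⟨t, ht⟩ := (Int.even_pow.mp hqeven).1
  have htpos : 0 < t := by omega
  have hfin1 : (r + v) ^ 2 + v ^ 2 = p ^ 2 := by
    linear_combination (-1 : ℤ) * hrMN - hNval + hpM
  have hfin2x : 2 * ((r + v) * v) = 2 * (2 * t ^ 2) := by
    linear_combination (q + 2 * t) * ht - hq2
  have hfin2 : (r + v) * v = 2 * t ^ 2 := mul_left_cancel₀ two_ne_zero hfin2x
  have hzMN : z = M ^ 2 + N ^ 2 := by rw [hzmn, ← hMN3]
  have hG1 : (1:ℤ) ≤ G := hGpos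
  have hM1 : (1:ℤ) ≤ M := hM
  have hp1 : (1:ℤ) ≤ p := hppos
  have s1 : p ≤ M := by rw [hpM]; exact le_self_pow₀ hp1 two_ne_zero
  have s2 : M < z := by
    have s2a : M ≤ M ^ 2 := le_self_pow₀ hM1 two_ne_zero
    have s2b : 0 < N ^ 2 := by positivity
    rw [hzMN]; linarith
  have s3 : z ≤ c := by rw [hzc]; exact le_mul_of_one_le_left hzpos.le hG1
  have hplt : p < c := by linarith
  have hnat : p.natAbs < C := by
    rw [← hC]; exact Int.natAbs_lt_natAbs_of_nonneg_of_lt hppos.le hplt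
  exact IH p.natAbs hnat p rfl (r + v) v t (by linarith) hvpos hppos htpos hfin1 hfin2

/-- Fermat's 1640 theorem: the area of a right-angled triangle with integer sides is
never a perfect square; there are no positive integers `a, b, c, d` with
`a² + b² = c²` and `a b = 2 d²`. -/
theorem fermat_right_triangle_area_not_square :
    ¬ ∃ a b c d : ℤ, 0 < a ∧ 0 < b ∧ 0 < c ∧ 0 < d ∧
        a ^ 2 + b ^ 2 = c ^ 2 ∧ a * b = 2 * d ^ 2 := by
  rintro ⟨a, b, c, d, ha, hb, hc, hd, h1, h2⟩
  exact fermat_area_descent c.natAbs c rfl a b d ha hb hc hd h1 h2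
end

section
/- Let A be a nonzero integer and let α, β be integers with α² + β² ≡ −1 (mod A). Define the quaternary quadratic form f(x,y,z,u) = (Ax + αz + βu)² + (Ay − βz + αu)² + z² + u². Then f is positive definite with determinant A⁴ (the determinant of its associated real symmetric matrix equals A⁴), and for all integers x, y, z, u the value f(x,y,z,u) is an integer divisible by A. -/
open Matrix

private lemma det_fin_four_aux (a b c d e f g h i j k l m n o p : ℝ) :
    Matrix.det !![a,b,c,d; e,f,g,h; i,j,k,l; m,n,o,p] =
      a*f*k*p - a*f*l*o - a*g*j*p + a*g*l*n + a*h*j*o - a*h*k*n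
      - b*e*k*p + b*e*l*o + b*g*i*p - b*g*l*m - b*h*i*o + b*h*k*m
      + c*e*j*p - c*e*l*n - c*f*i*p + c*f*l*m + c*h*i*n - c*h*j*m
      - d*e*j*o + d*e*k*n + d*f*i*o - d*f*k*m - d*g*i*n + d*g*j*m := by
  simp [Matrix.det_succ_row_zero, Fin.sum_univ_succ, Fin.succAbove,
    Matrix.submatrix_apply, Matrix.det_fin_three, Fin.castSucc, Fin.castAdd, Fin.castLE]
  ring

/-- The key construction in Hermite's 1854 proof of the four-square theorem: for a
nonzero integer `A` and integers `α, β` with `α² + β² ≡ -1 (mod A)`, the quaternary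
quadratic form `f(x,y,z,u) = (Ax + αz + βu)² + (Ay - βz + αu)² + z² + u²` is positive
definite with determinant `A⁴`, and its values at integer vectors are integers
divisible by `A`. -/
theorem hermite_four_square_form
    (A α β : ℤ) (hA : A ≠ 0) (hcong : A ∣ α ^ 2 + β ^ 2 + 1) :
    ∃ S : Matrix (Fin 4) (Fin 4) ℝ, S.IsSymm ∧
      (∀ v : Fin 4 → ℝ, v ⬝ᵥ S.mulVec v =
        ((A : ℝ) * v 0 + (α : ℝ) * v 2 + (β : ℝ) * v 3) ^ 2
          + ((A : ℝ) * v 1 - (β : ℝ) * v 2 + (α : ℝ) * v 3) ^ 2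
          + v 2 ^ 2 + v 3 ^ 2) ∧
      S.PosDef ∧ S.det = (A : ℝ) ^ 4 ∧
      ∀ x y z u : ℤ,
        A ∣ (A * x + α * z + β * u) ^ 2 + (A * y - β * z + α * u) ^ 2
              + z ^ 2 + u ^ 2 := by
  set a : ℝ := (A : ℝ) with ha
  set b : ℝ := (α : ℝ) with hb
  set c : ℝ := (β : ℝ) with hc
  set S : Matrix (Fin 4) (Fin 4) ℝ :=
    !![a^2, 0, a*b, a*c;
       0, a^2, -(a*c), a*b;
       a*b, -(a*c), b^2+c^2+1, 0;
       a*c, a*b, 0, b^2+c^2+1] with hS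
  have hsymm : S.IsSymm := by
    unfold Matrix.IsSymm
    ext i j
    fin_cases i <;> fin_cases j <;> simp [hS]
  have hform : ∀ v : Fin 4 → ℝ, v ⬝ᵥ S.mulVec v =
      (a * v 0 + b * v 2 + c * v 3) ^ 2
        + (a * v 1 - c * v 2 + b * v 3) ^ 2
        + v 2 ^ 2 + v 3 ^ 2 := by
    intro v
    simp [hS, Matrix.mulVec, dotProduct, Fin.sum_univ_four]
    ring
  have hA' : a ≠ 0 := Int.cast_ne_zero.mpr hA
  refine ⟨S, hsymm, hform, Matrix.posDef_iff_dotProduct_mulVec.mpr ⟨?_, ?_⟩, ?_, ?_⟩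
  · rw [Matrix.IsHermitian, Matrix.conjTranspose_eq_transpose_of_trivial]
    exact hsymm
  · intro v hv
    have key : star v ⬝ᵥ S.mulVec v =
        (a * v 0 + b * v 2 + c * v 3) ^ 2
        + (a * v 1 - c * v 2 + b * v 3) ^ 2
        + v 2 ^ 2 + v 3 ^ 2 := by
      simpa using hform v
    rw [key]
    have hnn : (0:ℝ) ≤ (a * v 0 + b * v 2 + c * v 3) ^ 2
        + (a * v 1 - c * v 2 + b * v 3) ^ 2 + v 2 ^ 2 + v 3 ^ 2 := by positivity
    rcases hnn.lt_or_eq with h | h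
    · exact h
    · exfalso
      have hp := sq_nonneg (a * v 0 + b * v 2 + c * v 3)
      have hq := sq_nonneg (a * v 1 - c * v 2 + b * v 3)
      have hr := sq_nonneg (v 2)
      have hs := sq_nonneg (v 3)
      have e0 : a * v 0 + b * v 2 + c * v 3 = 0 :=
        (pow_eq_zero_iff two_ne_zero).mp (by linarith)
      have e1 : a * v 1 - c * v 2 + b * v 3 = 0 :=
        (pow_eq_zero_iff two_ne_zero).mp (by linarith)
      have e2 : v 2 = 0 := (pow_eq_zero_iff two_ne_zero).mp (by linarith)
      have e3 : v 3 = 0 := (pow_eq_zero_iff two_ne_zero).mp (by linarith)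
      apply hv
      funext i
      have hv0 : v 0 = 0 := by
        rw [e2, e3] at e0
        simpa [hA'] using e0
      have hv1 : v 1 = 0 := by
        rw [e2, e3] at e1
        simpa [hA'] using e1
      fin_cases i <;> simp [hv0, hv1, e2, e3]
  · rw [hS, det_fin_four_aux]
    ring
  · intro x y z u
    obtain ⟨k, hk⟩ := hcong
    refine ⟨A * x ^ 2 + A * y ^ 2 + 2 * x * (α * z + β * u)
      + 2 * y * (α * u - β * z) + k * (z ^ 2 + u ^ 2), ?_⟩
    linear_combination (z ^ 2 + u ^ 2) * hk
end
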